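/- arXiv:2010.15988 — 6 statements merged into one kernel-verified Lean document; each statement's English description precedes it below -/
import Mathlib

section
/- Let g = q₁⋯q_r be odd squarefree with r prime factors, d even, and gcd(g,d) = 1. For ε₁, ε₂ ∈ {±1}, the number of residues 1 ≤ α ≤ g with Jacobi symbols (α/g) = ε₁ and ((α+d)/g) = ε₂ equals (1/4)·[|φ_d(g)| + (-1)^r·(ε₁·((-d)/g) + ε₂·(d/g) + ε₁ε₂)]. -/
open Finset

variable {F : Type} [Field F] [Fintype F] [DecidableEq F]

lemma sumJJ (hF : ringChar F ≠ 2) (δ : F) (hδ : δ ≠ 0) :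
    ∑ x : F, quadraticChar F x * quadraticChar F (x + δ) = -1 := by
  set χ := quadraticChar F with hχ
  have hjs : jacobiSum χ χ = - χ (-1) := by
    have h := jacobiSum_nontrivial_inv (quadraticChar_ne_one hF)
    rwa [(quadraticChar_isQuadratic F).inv] at h
  have hδδ : χ δ * χ δ = 1 := by
    have := quadraticChar_sq_one hδ; rwa [pow_two] at this
  have key : ∑ x : F, χ x * χ (x + δ) = ∑ t : F, χ (-1) * (χ t * χ (1 - t)) := by
    refine (Fintype.sum_equiv ((Equiv.mulLeft₀ δ hδ).trans (Equiv.subRight δ))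
      _ _ fun t => ?_).symm
    show χ (-1) * (χ t * χ (1 - t)) = χ (δ * t - δ) * χ (δ * t - δ + δ)
    have h1 : δ * t - δ = δ * (-1 * (1 - t)) := by ring
    have h2 : δ * t - δ + δ = δ * t := by ring
    rw [h2, h1, map_mul, map_mul, map_mul]
    linear_combination (-(χ (-1) * χ (1 - t) * χ t)) * hδδ
  rw [key, ← Finset.mul_sum]
  have : ∑ t : F, χ t * χ (1 - t) = jacobiSum χ χ := rfl
  rw [this, hjs]
  have h1 : χ (-1) * χ (-1) = 1 := by rw [← map_mul]; norm_num
  rw [mul_neg, h1]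

lemma sum21 (hF : ringChar F ≠ 2) (δ : F) :
    ∑ x : F, (quadraticChar F x)^2 * quadraticChar F (x + δ) = - quadraticChar F δ := by
  set χ := quadraticChar F with hχ
  have h0 : ∑ x : F, χ (x + δ) = 0 := by
    exact (Fintype.sum_equiv (Equiv.addRight δ) (fun x => χ (x + δ)) χ fun x => rfl).trans
      (quadraticChar_sum_zero hF)
  have step1 : ∑ x : F, (χ x)^2 * χ (x + δ)
      = ∑ x ∈ univ.erase 0, (χ x)^2 * χ (x + δ) := by
    rw [← Finset.sum_erase_add _ _ (mem_univ (0:F))]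
    simp [hχ]
  have step2 : ∑ x ∈ univ.erase 0, (χ x)^2 * χ (x + δ)
      = ∑ x ∈ univ.erase 0, χ (x + δ) := by
    refine Finset.sum_congr rfl fun x hx => ?_
    rw [quadraticChar_sq_one (Finset.mem_erase.mp hx).1, one_mul]
  have step3 := Finset.sum_erase_add univ (fun x : F => χ (x + δ)) (mem_univ (0:F))
  rw [h0] at step3
  rw [step1, step2]
  simpa using by linarith [step3]

lemma sum12 (hF : ringChar F ≠ 2) (δ : F) :
    ∑ x : F, quadraticChar F x * (quadraticChar F (x + δ))^2 = - quadraticChar F (-δ) := by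
  set χ := quadraticChar F with hχ
  have h0 : ∑ x : F, χ x = 0 := quadraticChar_sum_zero hF
  have step1 : ∑ x : F, χ x * (χ (x + δ))^2
      = ∑ x ∈ univ.erase (-δ), χ x * (χ (x + δ))^2 := by
    rw [← Finset.sum_erase_add _ _ (mem_univ (-δ:F))]
    simp [hχ]
  have step2 : ∑ x ∈ univ.erase (-δ), χ x * (χ (x + δ))^2
      = ∑ x ∈ univ.erase (-δ), χ x := by
    refine Finset.sum_congr rfl fun x hx => ?_
    have hx0 : x + δ ≠ 0 := by
      intro h
      exact (Finset.mem_erase.mp hx).1 (by linear_combination h)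
    rw [quadraticChar_sq_one hx0, mul_one]
  have step3 := Finset.sum_erase_add univ (fun x : F => χ x) (mem_univ (-δ:F))
  rw [h0] at step3
  rw [step1, step2]
  simpa using by linarith [step3]
open Finset

lemma jac_mod {n k m : ℕ} (h : k % n = m % n) : jacobiSym (k:ℤ) n = jacobiSym (m:ℤ) n := by
  refine jacobiSym.mod_left' ?_
  rw [← Int.natCast_mod, ← Int.natCast_mod, h]

/-- the basic double jacobi-symbol power sum -/
def S (d a b n : ℕ) : ℤ :=
  ∑ k ∈ Finset.range n, (jacobiSym (k:ℤ) n)^a * (jacobiSym ((k + d : ℕ):ℤ) n)^b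

lemma sum_range_zmod (n : ℕ) [NeZero n] (f : ℕ → ℤ) :
    ∑ k ∈ Finset.range n, f k = ∑ x : ZMod n, f x.val := by
  refine Finset.sum_nbij' (fun k => (k : ZMod n)) (fun x => x.val) ?_ ?_ ?_ ?_ ?_
  · intro a _; exact mem_univ _
  · intro x _; exact Finset.mem_range.mpr (ZMod.val_lt x)
  · intro a ha; exact ZMod.val_cast_of_lt (Finset.mem_range.mp ha)
  · intro x _; simp [ZMod.natCast_val, ZMod.cast_id]
  · intro a ha; rw [ZMod.val_cast_of_lt (Finset.mem_range.mp ha)]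

lemma sum_Icc_zmod (g : ℕ) [NeZero g] (f : ℕ → ℤ) (hf : ∀ k, f (k % g) = f k) :
    ∑ α ∈ Finset.Icc 1 g, f α = ∑ x : ZMod g, f x.val := by
  have hg0 : g ≠ 0 := NeZero.ne g
  refine Finset.sum_nbij' (fun k => (k : ZMod g)) (fun x => if x = 0 then g else x.val)
    ?_ ?_ ?_ ?_ ?_
  · intro a _; exact mem_univ _
  · intro x _
    by_cases hx : x = 0
    · simp [hx, Finset.mem_Icc, Nat.one_le_iff_ne_zero.mpr hg0]
    · simp only [hx, if_false, Finset.mem_Icc]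
      exact ⟨Nat.one_le_iff_ne_zero.mpr (fun h => hx ((ZMod.val_eq_zero x).mp h)),
        (ZMod.val_lt x).le⟩
  · intro a ha
    rw [Finset.mem_Icc] at ha
    by_cases h0 : (a : ZMod g) = 0
    · have : g ∣ a := (ZMod.natCast_eq_zero_iff a g).mp h0
      have : a = g := le_antisymm ha.2 (Nat.le_of_dvd (by omega) this)
      simp [h0, this]
    · have : a ≠ g := by
        rintro rfl; exact h0 (by simp)
      have halt : a < g := lt_of_le_of_ne ha.2 this
      simp [h0, ZMod.val_cast_of_lt halt]
  · intro x _
    by_cases hx : x = 0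
    · simp [hx]
    · simp [hx, ZMod.natCast_val, ZMod.cast_id]
  · intro a _
    rw [ZMod.val_natCast, hf]

lemma S_zmod (d a b n : ℕ) [NeZero n] :
    S d a b n = ∑ x : ZMod n, (jacobiSym (x.val:ℤ) n)^a * (jacobiSym ((x.val + d : ℕ):ℤ) n)^b :=
  sum_range_zmod n _

lemma S_one (d a b : ℕ) : S d a b 1 = 1 := by
  simp [S]

lemma S_mul (d a b p m : ℕ) (hp : p ≠ 0) (hm : m ≠ 0) (hcop : Nat.Coprime p m) :
    S d a b (p * m) = S d a b p * S d a b m := by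
  haveI : NeZero p := ⟨hp⟩
  haveI : NeZero m := ⟨hm⟩
  haveI : NeZero (p * m) := ⟨mul_ne_zero hp hm⟩
  rw [S_zmod, S_zmod, S_zmod]
  have hbij : Function.Bijective
      (fun x : ZMod (p*m) => (((x.val : ZMod p), (x.val : ZMod m)) : ZMod p × ZMod m)) := by
    rw [Fintype.bijective_iff_injective_and_card]
    constructor
    · intro x y hxy
      simp only [Prod.mk.injEq] at hxy
      have h1 : x.val % p = y.val % p := by
        have := congrArg ZMod.val hxy.1; rwa [ZMod.val_natCast, ZMod.val_natCast] at this
      have h2 : x.val % m = y.val % m := by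
        have := congrArg ZMod.val hxy.2; rwa [ZMod.val_natCast, ZMod.val_natCast] at this
      have : x.val % (p * m) = y.val % (p * m) :=
        (Nat.modEq_and_modEq_iff_modEq_mul hcop).mp ⟨h1, h2⟩
      rw [Nat.mod_eq_of_lt (ZMod.val_lt x), Nat.mod_eq_of_lt (ZMod.val_lt y)] at this
      exact ZMod.val_injective _ this
    · simp [ZMod.card]
  rw [Fintype.sum_bijective _ hbij _
    (fun yz : ZMod p × ZMod m =>
      ((jacobiSym (yz.1.val:ℤ) p)^a * (jacobiSym ((yz.1.val + d : ℕ):ℤ) p)^b) *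
      ((jacobiSym (yz.2.val:ℤ) m)^a * (jacobiSym ((yz.2.val + d : ℕ):ℤ) m)^b)) ?_]
  · rw [Fintype.sum_prod_type, Finset.sum_mul_sum]
  · intro x
    simp only
    have e1 : jacobiSym (x.val:ℤ) (p*m) = jacobiSym (x.val:ℤ) p * jacobiSym (x.val:ℤ) m :=
      jacobiSym.mul_right' _ hp hm
    have e2 : jacobiSym ((x.val + d : ℕ):ℤ) (p*m)
        = jacobiSym ((x.val + d : ℕ):ℤ) p * jacobiSym ((x.val + d : ℕ):ℤ) m :=
      jacobiSym.mul_right' _ hp hm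
    have ep : jacobiSym (x.val:ℤ) p = jacobiSym (((x.val : ZMod p)).val:ℤ) p :=
      jac_mod (by rw [ZMod.val_natCast, Nat.mod_mod_of_dvd _ dvd_rfl])
    have em : jacobiSym (x.val:ℤ) m = jacobiSym (((x.val : ZMod m)).val:ℤ) m :=
      jac_mod (by rw [ZMod.val_natCast, Nat.mod_mod_of_dvd _ dvd_rfl])
    have ep' : jacobiSym ((x.val + d : ℕ):ℤ) p
        = jacobiSym ((((x.val : ZMod p)).val + d : ℕ):ℤ) p :=
      jac_mod (by rw [ZMod.val_natCast, Nat.mod_add_mod])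
    have em' : jacobiSym ((x.val + d : ℕ):ℤ) m
        = jacobiSym ((((x.val : ZMod m)).val + d : ℕ):ℤ) m :=
      jac_mod (by rw [ZMod.val_natCast, Nat.mod_add_mod])
    rw [e1, e2, ep, em, ep', em']
    ring

lemma S_prime (d a b q : ℕ) [hq : Fact q.Prime] :
    S d a b q = ∑ x : ZMod q,
      (quadraticChar (ZMod q) x)^a * (quadraticChar (ZMod q) (x + (d : ZMod q)))^b := by
  haveI : NeZero q := ⟨hq.out.pos.ne'⟩
  rw [S_zmod]
  refine Fintype.sum_congr _ _ fun x => ?_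
  have h1 : jacobiSym (x.val:ℤ) q = quadraticChar (ZMod q) x := by
    rw [← jacobiSym.legendreSym.to_jacobiSym]
    show quadraticChar (ZMod q) ((x.val : ℤ) : ZMod q) = _
    congr 1
    push_cast [ZMod.natCast_val, ZMod.cast_id]
    rfl
  have h2 : jacobiSym ((x.val + d : ℕ):ℤ) q = quadraticChar (ZMod q) (x + (d : ZMod q)) := by
    rw [← jacobiSym.legendreSym.to_jacobiSym]
    show quadraticChar (ZMod q) (((x.val + d : ℕ) : ℤ) : ZMod q) = _
    congr 1
    push_cast [ZMod.natCast_val, ZMod.cast_id]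
    rfl
  rw [h1, h2]

lemma ringChar_ne_two {q : ℕ} (hq : q.Prime) (hq2 : q ≠ 2) : ringChar (ZMod q) ≠ 2 := by
  rw [ZMod.ringChar_zmod_n]
  exact hq2

lemma S11_prime (d q : ℕ) (hq : q.Prime) (hq2 : q ≠ 2) (hqd : ¬ q ∣ d) :
    S d 1 1 q = -1 := by
  haveI : Fact q.Prime := ⟨hq⟩
  rw [S_prime d 1 1 q]
  simp only [pow_one]
  refine sumJJ (ringChar_ne_two hq hq2) _ ?_
  rw [Ne, ZMod.natCast_eq_zero_iff]
  exact hqd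

lemma S21_prime (d q : ℕ) (hq : q.Prime) (hq2 : q ≠ 2) :
    S d 2 1 q = -(jacobiSym (d:ℤ) q) := by
  haveI : Fact q.Prime := ⟨hq⟩
  rw [S_prime d 2 1 q]
  simp only [pow_one]
  rw [sum21 (ringChar_ne_two hq hq2) ((d : ZMod q))]
  congr 1
  rw [← jacobiSym.legendreSym.to_jacobiSym]
  show _ = quadraticChar (ZMod q) (((d:ℤ)) : ZMod q)
  norm_cast

lemma S12_prime (d q : ℕ) (hq : q.Prime) (hq2 : q ≠ 2) :
    S d 1 2 q = -(jacobiSym (-(d:ℤ)) q) := by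
  haveI : Fact q.Prime := ⟨hq⟩
  rw [S_prime d 1 2 q]
  simp only [pow_one]
  rw [sum12 (ringChar_ne_two hq hq2) ((d : ZMod q))]
  congr 1
  rw [← jacobiSym.legendreSym.to_jacobiSym]
  rw [show legendreSym q (-(d:ℤ)) = quadraticChar (ZMod q) ((-(d:ℤ) : ℤ) : ZMod q) from rfl]
  norm_cast

lemma S_prod (d a b : ℕ) (c : ℕ → ℤ)
    (hc : ∀ q : ℕ, q.Prime → q ≠ 2 → ¬ q ∣ d → S d a b q = c q) (g : ℕ) :
    Squarefree g → Odd g → Nat.Coprime g d → S d a b g = ∏ q ∈ g.primeFactors, c q := by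
  induction g using Nat.strong_induction_on with
  | _ g IH =>
    intro hsf hodd hcop
    rcases eq_or_ne g 1 with rfl | hg1
    · simp [S_one]
    · obtain ⟨p, hp, hpdvd⟩ := Nat.exists_prime_and_dvd hg1
      obtain ⟨m, rfl⟩ := hpdvd
      have hsf' := (Nat.squarefree_mul_iff.mp hsf)
      obtain ⟨hcop_pm, hsfp, hsfm⟩ := hsf'
      have hp0 : p ≠ 0 := hp.pos.ne'
      have hm0 : m ≠ 0 := by rintro rfl; rw [mul_zero] at hsf; exact not_squarefree_zero hsf
      have hoddm : Odd m := (Nat.odd_mul.mp hodd).2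
      have hoddp : Odd p := (Nat.odd_mul.mp hodd).1
      have hp2 : p ≠ 2 := by rintro rfl; exact (Nat.not_odd_iff_even.mpr (by decide)) hoddp
      have hpd : ¬ p ∣ d :=
        (Nat.Prime.coprime_iff_not_dvd hp).mp
          (Nat.Coprime.coprime_dvd_left (dvd_mul_right p m) hcop)
      have hcopm : Nat.Coprime m d := Nat.Coprime.coprime_dvd_left (dvd_mul_left m p) hcop
      have hmlt : m < p * m := by
        have h1 : 1 * m < p * m := (Nat.mul_lt_mul_right (Nat.pos_of_ne_zero hm0)).mpr hp.one_lt
        rwa [one_mul] at h1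
      rw [S_mul d a b p m hp0 hm0 hcop_pm, hc p hp hp2 hpd, IH m hmlt hsfm hoddm hcopm]
      have hpnotm : p ∉ m.primeFactors := by
        intro hmem
        have hdvd : p ∣ m := Nat.dvd_of_mem_primeFactors hmem
        exact (Nat.Prime.coprime_iff_not_dvd hp).mp hcop_pm hdvd
      rw [Nat.primeFactors_mul hp0 hm0, hp.primeFactors,
        Finset.prod_union (by simpa using hpnotm), Finset.prod_singleton]

lemma jac_prod (A : ℤ) (s : Finset ℕ) (h : ∀ q ∈ s, q ≠ 0) :
    jacobiSym A (∏ q ∈ s, q) = ∏ q ∈ s, jacobiSym A q := by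
  induction s using Finset.induction_on with
  | empty => simp
  | @insert a s has IH =>
    rw [Finset.prod_insert has, Finset.prod_insert has,
      jacobiSym.mul_right' A (h a (Finset.mem_insert_self a s))
        (Finset.prod_ne_zero_iff.mpr (fun q hq => h q (Finset.mem_insert_of_mem hq))),
      IH (fun q hq => h q (Finset.mem_insert_of_mem hq))]

lemma jac_factor (A : ℤ) (g : ℕ) (hsf : Squarefree g) :
    jacobiSym A g = ∏ q ∈ g.primeFactors, jacobiSym A q := by
  conv_lhs => rw [← Nat.prod_primeFactors_of_squarefree hsf]
  exact jac_prod A _ (fun q hq => (Nat.prime_of_mem_primeFactors hq).pos.ne')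

lemma S11_val (d g : ℕ) (hsf : Squarefree g) (hodd : Odd g) (hcop : Nat.Coprime g d) :
    S d 1 1 g = (-1) ^ g.primeFactors.card := by
  rw [S_prod d 1 1 (fun _ => -1)
    (fun q hq hq2 hqd => S11_prime d q hq hq2 hqd) g hsf hodd hcop]
  simp

lemma S21_val (d g : ℕ) (hsf : Squarefree g) (hodd : Odd g) (hcop : Nat.Coprime g d) :
    S d 2 1 g = (-1) ^ g.primeFactors.card * jacobiSym (d:ℤ) g := by
  rw [S_prod d 2 1 (fun q => -(jacobiSym (d:ℤ) q))
    (fun q hq hq2 _ => S21_prime d q hq hq2) g hsf hodd hcop]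
  rw [jac_factor (d:ℤ) g hsf,
    Finset.prod_congr rfl (fun q _ => (neg_one_mul (jacobiSym (d:ℤ) q)).symm),
    Finset.prod_mul_distrib, Finset.prod_const]

lemma S12_val (d g : ℕ) (hsf : Squarefree g) (hodd : Odd g) (hcop : Nat.Coprime g d) :
    S d 1 2 g = (-1) ^ g.primeFactors.card * jacobiSym (-(d:ℤ)) g := by
  rw [S_prod d 1 2 (fun q => -(jacobiSym (-(d:ℤ)) q))
    (fun q hq hq2 _ => S12_prime d q hq hq2) g hsf hodd hcop]
  rw [jac_factor (-(d:ℤ)) g hsf,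
    Finset.prod_congr rfl (fun q _ => (neg_one_mul (jacobiSym (-(d:ℤ)) q)).symm),
    Finset.prod_mul_distrib, Finset.prod_const]

lemma sum_Icc_S (d a b g : ℕ) [NeZero g] :
    ∑ α ∈ Finset.Icc 1 g, (jacobiSym (α:ℤ) g)^a * (jacobiSym ((α + d : ℕ):ℤ) g)^b
      = S d a b g := by
  rw [S_zmod]
  refine sum_Icc_zmod g (fun k => (jacobiSym (k:ℤ) g)^a * (jacobiSym ((k + d : ℕ):ℤ) g)^b)
    fun k => ?_
  show (jacobiSym ((k % g : ℕ):ℤ) g)^a * (jacobiSym ((k % g + d : ℕ):ℤ) g)^b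
    = (jacobiSym (k:ℤ) g)^a * (jacobiSym ((k + d : ℕ):ℤ) g)^b
  rw [jac_mod (Nat.mod_mod_of_dvd k dvd_rfl),
    jac_mod (show (k % g + d) % g = (k + d) % g from Nat.mod_add_mod k g d)]

lemma sqJ (A : ℤ) (n : ℕ) [NeZero n] :
    (jacobiSym A n)^2 = if Int.gcd A n = 1 then 1 else 0 := by
  by_cases h : Int.gcd A n = 1
  · rcases jacobiSym.eq_one_or_neg_one h with h1 | h1 <;> rw [h1] <;> simp [h]
  · rw [jacobiSym.eq_zero_iff_not_coprime.mpr h]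
    simp [h]

theorem stmt_5 (g d : ℕ) (hgodd : Odd g) (hgsf : Squarefree g)
    (hd : 0 < d) (hde : Even d) (hcop : Nat.Coprime g d)
    (ε₁ ε₂ : ℤ) (hε₁ : ε₁ = 1 ∨ ε₁ = -1) (hε₂ : ε₂ = 1 ∨ ε₂ = -1) :
    4 * (((Finset.Icc 1 g).filter
        (fun α : ℕ => jacobiSym (α : ℤ) g = ε₁ ∧ jacobiSym ((α : ℤ) + d) g = ε₂)).card : ℤ)
      = (((Finset.Icc 1 g).filter
          (fun α => Nat.gcd α g = 1 ∧ Nat.gcd (α + d) g = 1)).card : ℤ)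
        + (-1) ^ g.primeFactors.card *
            (ε₁ * jacobiSym (-(d : ℤ)) g + ε₂ * jacobiSym (d : ℤ) g + ε₁ * ε₂) := by
  have hg0 : g ≠ 0 := by rintro rfl; exact not_squarefree_zero hgsf
  haveI : NeZero g := ⟨hg0⟩
  have castK : ∀ α : ℕ, (α:ℤ) + (d:ℤ) = ((α + d : ℕ):ℤ) := fun α => by push_cast; ring
  have hA : (4:ℤ) * (((Finset.Icc 1 g).filter
      (fun α : ℕ => jacobiSym (α : ℤ) g = ε₁ ∧ jacobiSym ((α : ℤ) + d) g = ε₂)).card : ℤ)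
      = ∑ α ∈ Finset.Icc 1 g,
        ((jacobiSym (α:ℤ) g)^2 + ε₁ * jacobiSym (α:ℤ) g) *
        ((jacobiSym ((α+d:ℕ):ℤ) g)^2 + ε₂ * jacobiSym ((α+d:ℕ):ℤ) g) := by
    rw [Finset.card_filter]
    push_cast
    rw [Finset.mul_sum]
    refine Finset.sum_congr rfl fun α _ => ?_
    have tj := jacobiSym.trichotomy (α:ℤ) g
    have tk := jacobiSym.trichotomy ((α:ℤ)+(d:ℤ)) g
    rcases hε₁ with rfl | rfl <;> rcases hε₂ with rfl | rfl <;>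
      rcases tj with hj | hj | hj <;> rcases tk with hk | hk | hk <;>
      rw [hj, hk] <;> norm_num
  have hC : (((Finset.Icc 1 g).filter
      (fun α => Nat.gcd α g = 1 ∧ Nat.gcd (α + d) g = 1)).card : ℤ)
      = ∑ α ∈ Finset.Icc 1 g, (jacobiSym (α:ℤ) g)^2 * (jacobiSym ((α+d:ℕ):ℤ) g)^2 := by
    rw [Finset.card_filter]
    push_cast
    refine Finset.sum_congr rfl fun α _ => ?_
    rw [sqJ, sqJ]
    have g1 : Int.gcd (α:ℤ) (g:ℤ) = Nat.gcd α g := Int.gcd_natCast_natCast _ _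
    have g2 : Int.gcd ((α:ℤ)+(d:ℤ)) (g:ℤ) = Nat.gcd (α+d) g := by
      rw [castK α]; exact Int.gcd_natCast_natCast _ _
    rw [g1, g2]
    by_cases h1 : Nat.gcd α g = 1 <;> by_cases h2 : Nat.gcd (α+d) g = 1 <;>
      simp [h1, h2]
  have hB : ∑ α ∈ Finset.Icc 1 g,
        ((jacobiSym (α:ℤ) g)^2 + ε₁ * jacobiSym (α:ℤ) g) *
        ((jacobiSym ((α+d:ℕ):ℤ) g)^2 + ε₂ * jacobiSym ((α+d:ℕ):ℤ) g)
      = (∑ α ∈ Finset.Icc 1 g, (jacobiSym (α:ℤ) g)^2 * (jacobiSym ((α+d:ℕ):ℤ) g)^2)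
        + ε₂ * (∑ α ∈ Finset.Icc 1 g, (jacobiSym (α:ℤ) g)^2 * (jacobiSym ((α+d:ℕ):ℤ) g)^1)
        + ε₁ * (∑ α ∈ Finset.Icc 1 g, (jacobiSym (α:ℤ) g)^1 * (jacobiSym ((α+d:ℕ):ℤ) g)^2)
        + (ε₁*ε₂) * (∑ α ∈ Finset.Icc 1 g,
            (jacobiSym (α:ℤ) g)^1 * (jacobiSym ((α+d:ℕ):ℤ) g)^1) := by
    rw [Finset.mul_sum, Finset.mul_sum, Finset.mul_sum, ← Finset.sum_add_distrib,
      ← Finset.sum_add_distrib, ← Finset.sum_add_distrib]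
    refine Finset.sum_congr rfl fun α _ => by ring
  rw [hA, hB, sum_Icc_S d 2 1 g, sum_Icc_S d 1 2 g, sum_Icc_S d 1 1 g,
    S21_val d g hgsf hgodd hcop, S12_val d g hgsf hgodd hcop, S11_val d g hgsf hgodd hcop,
    ← hC]
  ring
end

section
/- Let g be odd squarefree and d even. Then |Φ_{-1,-1}(g,d)| = 0 if and only if: g = 1, or (g = 5 and d ≡ 2 or 3 mod 5), or (g does not divide d but g divides 3d). -/
open Finset


lemma jac_congr {g a b : ℕ} (h : a % g = b % g) :
    jacobiSym (a : ℤ) g = jacobiSym (b : ℤ) g := by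
  apply jacobiSym.mod_left'
  rw [← Int.natCast_mod, ← Int.natCast_mod, h]

/-- pair property -/
def JP (g d : ℕ) (s t : ℤ) : Prop :=
  ∃ x : ℕ, jacobiSym (x : ℤ) g = s ∧ jacobiSym ((x + d : ℕ) : ℤ) g = t

lemma JP.mul {m n d : ℕ} {s t s' t' : ℤ} (h : Nat.Coprime m n) (hm : m ≠ 0) (hn : n ≠ 0)
    (h1 : JP m d s t) (h2 : JP n d s' t') : JP (m * n) d (s * s') (t * t') := by
  obtain ⟨x, hx1, hx2⟩ := h1
  obtain ⟨y, hy1, hy2⟩ := h2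
  obtain ⟨k, hkm, hkn⟩ := Nat.chineseRemainder h x y
  refine ⟨k, ?_, ?_⟩
  · rw [jacobiSym.mul_right' _ hm hn, jac_congr (g := m) hkm, jac_congr (g := n) hkn, hx1, hy1]
  · rw [jacobiSym.mul_right' _ hm hn, jac_congr (g := m) (hkm.add_right d),
      jac_congr (g := n) (hkn.add_right d), hx2, hy2]

lemma JP_of (g d x : ℕ) (s t : ℤ) (h1 : jacobiSym (x : ℤ) g = s)
    (h2 : jacobiSym (((x + d) % g : ℕ) : ℤ) g = t) : JP g d s t :=
  ⟨x, h1, by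
    rw [jac_congr (a := x + d) (b := (x + d) % g) (Nat.mod_mod_of_dvd (x + d) dvd_rfl).symm]
    exact h2⟩

lemma key_sum {p : ℕ} [Fact p.Prime] (hp2 : p ≠ 2) (e : ZMod p) (he : e ≠ 0) :
    ∑ x : ZMod p, quadraticChar (ZMod p) x * quadraticChar (ZMod p) (x + e) = -1 := by
  have hF : ringChar (ZMod p) ≠ 2 := by rwa [ZMod.ringChar_zmod_n]
  set χ := quadraticChar (ZMod p) with hχ
  have h1 : ∑ z ∈ Finset.univ.erase (1 : ZMod p), χ z = -1 := by
    have := Finset.sum_erase_add Finset.univ (fun z => χ z) (Finset.mem_univ (1 : ZMod p))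
    rw [quadraticChar_sum_zero hF] at this
    have h1 : χ 1 = 1 := map_one χ
    linarith [this]
  have h2 : ∑ x ∈ Finset.univ.erase (0 : ZMod p), χ x * χ (x + e)
      = ∑ z ∈ Finset.univ.erase (1 : ZMod p), χ z := by
    apply Finset.sum_nbij' (i := fun x => 1 + e * x⁻¹) (j := fun z => e * (z - 1)⁻¹)
    · intro x hx
      have hx0 : x ≠ 0 := Finset.ne_of_mem_erase hx
      simp only [Finset.mem_erase, Finset.mem_univ, and_true]
      intro hc
      have : e * x⁻¹ = 0 := by linear_combination hc
      rcases mul_eq_zero.mp this with h | h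
      · exact he h
      · exact hx0 (inv_eq_zero.mp h)
    · intro z hz
      have hz1 : z ≠ 1 := Finset.ne_of_mem_erase hz
      simp only [Finset.mem_erase, Finset.mem_univ, and_true]
      intro hc
      rcases mul_eq_zero.mp hc with h | h
      · exact he h
      · exact hz1 (by
          have := inv_eq_zero.mp h
          have : z = 1 := by linear_combination this
          exact this)
    · intro x hx
      have hx0 : x ≠ 0 := Finset.ne_of_mem_erase hx
      field_simp
      rw [show x + e - x = e by ring, div_self he]
    · intro z hz
      have hz1 : z ≠ 1 := Finset.ne_of_mem_erase hz
      have : z - 1 ≠ 0 := sub_ne_zero.mpr hz1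
      field_simp
      ring
    · intro x hx
      have hx0 : x ≠ 0 := Finset.ne_of_mem_erase hx
      have hxe : x + e = x * (1 + e * x⁻¹) := by field_simp
      rw [hxe, map_mul, ← mul_assoc, ← pow_two, quadraticChar_sq_one hx0, one_mul]
  calc ∑ x : ZMod p, χ x * χ (x + e)
      = ∑ x ∈ Finset.univ.erase (0 : ZMod p), χ x * χ (x + e) + χ 0 * χ (0 + e) :=
        (Finset.sum_erase_add _ _ (Finset.mem_univ _)).symm
    _ = -1 := by rw [quadraticChar_zero, zero_mul, add_zero, h2, h1]

lemma exists_pair_zmod {p : ℕ} [Fact p.Prime] (h7 : 7 ≤ p) (e : ZMod p) (he : e ≠ 0)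
    (a b : ℤ) (ha : a = 1 ∨ a = -1) (hb : b = 1 ∨ b = -1) :
    ∃ x : ZMod p, quadraticChar (ZMod p) x = a ∧ quadraticChar (ZMod p) (x + e) = b := by
  have hp2 : p ≠ 2 := by omega
  have hF : ringChar (ZMod p) ≠ 2 := by rwa [ZMod.ringChar_zmod_n]
  set χ := quadraticChar (ZMod p) with hχ
  by_contra H
  push_neg at H
  set f : ZMod p → ℤ := fun x => (1 + a * χ x) * (1 + b * χ (x + e)) with hf
  have hsum : ∑ x : ZMod p, f x = (p : ℤ) - a * b := by
    have e1 : ∑ x : ZMod p, χ x = 0 := quadraticChar_sum_zero hF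
    have e2 : ∑ x : ZMod p, χ (x + e) = 0 := by
      have := Fintype.sum_equiv (Equiv.addRight e) (fun x => χ (x + e)) (fun z => χ z)
        (fun x => rfl)
      rw [this]; exact e1
    have e3 : ∑ x : ZMod p, χ x * χ (x + e) = -1 := key_sum hp2 e he
    have expand : ∀ x : ZMod p, f x
        = 1 + a * χ x + (b * χ (x + e) + (a * b) * (χ x * χ (x + e))) := by
      intro x; rw [hf]; ring
    rw [Finset.sum_congr rfl (fun x _ => expand x)]
    rw [Finset.sum_add_distrib, Finset.sum_add_distrib, Finset.sum_add_distrib,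
      ← Finset.mul_sum, ← Finset.mul_sum, ← Finset.mul_sum, e1, e2, e3,
      Finset.sum_const, Finset.card_univ, ZMod.card]
    push_cast
    ring
  -- upper bound
  have hne : (-e : ZMod p) ≠ 0 := neg_ne_zero.mpr he
  have hmem : (-e : ZMod p) ∈ Finset.univ.erase (0 : ZMod p) :=
    Finset.mem_erase.mpr ⟨hne, Finset.mem_univ _⟩
  have hrest : ∑ x ∈ (Finset.univ.erase (0 : ZMod p)).erase (-e), f x = 0 := by
    apply Finset.sum_eq_zero
    intro x hx
    have hx1 : x ≠ -e := Finset.ne_of_mem_erase hx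
    have hx0 : x ≠ 0 := Finset.ne_of_mem_erase (Finset.mem_of_mem_erase hx)
    have hxe : x + e ≠ 0 := fun hc => hx1 (by linear_combination hc)
    have d1 := quadraticChar_dichotomy hx0
    have d2 := quadraticChar_dichotomy hxe
    have hH := H x
    rw [hf]
    rcases ha with rfl | rfl <;> rcases hb with rfl | rfl <;>
      rcases d1 with d1 | d1 <;> rcases d2 with d2 | d2 <;>
      simp only [← hχ] at d1 d2 ⊢ <;> rw [d1, d2] <;> simp_all <;> ring
  have hS : ∑ x : ZMod p, f x ≤ 4 := by
    have split1 := Finset.sum_erase_add Finset.univ f (Finset.mem_univ (0 : ZMod p))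
    have split2 := Finset.sum_erase_add _ f hmem
    have hb0 : f 0 ≤ 2 := by
      have : χ (0 + e) = 1 ∨ χ (0 + e) = -1 := quadraticChar_dichotomy (by simpa using he)
      rw [hf]; simp only [quadraticChar_zero, ← hχ, mul_zero, add_zero, one_mul]
      have : b * χ (0 + e) ≤ 1 := by
        rcases hb with rfl | rfl <;> rcases this with h | h <;> rw [h] <;> norm_num
      have h0 : χ 0 = 0 := quadraticChar_zero
      rw [h0, mul_zero, add_zero, one_mul]
      linarith
    have hbe : f (-e) ≤ 2 := by
      have hce : χ (-e) = 1 ∨ χ (-e) = -1 := quadraticChar_dichotomy hne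
      simp only [hf]
      have h0 : ((-e : ZMod p) + e) = 0 := by ring
      rw [h0]
      have hz : χ (0 : ZMod p) = 0 := quadraticChar_zero
      rw [hz, mul_zero, add_zero, mul_one]
      have : a * χ (-e) ≤ 1 := by
        rcases ha with rfl | rfl <;> rcases hce with h | h <;> rw [h] <;> norm_num
      linarith
    rw [← split1, ← split2, hrest]
    linarith
  rw [hsum] at hS
  have hab : a * b ≤ 1 := by rcases ha with rfl | rfl <;> rcases hb with rfl | rfl <;> norm_num
  have : (7 : ℤ) ≤ p := by exact_mod_cast h7
  linarith



lemma jac_of_val {p : ℕ} [Fact p.Prime] (n : ℕ) :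
    jacobiSym (n : ℤ) p = quadraticChar (ZMod p) ((n : ℕ) : ZMod p) := by
  rw [← jacobiSym.legendreSym.to_jacobiSym]
  rw [legendreSym]
  norm_cast

lemma JP_big {p : ℕ} (hp : p.Prime) (h7 : 7 ≤ p) (d : ℕ) (hd : ¬ p ∣ d)
    (a b : ℤ) (ha : a = 1 ∨ a = -1) (hb : b = 1 ∨ b = -1) : JP p d a b := by
  haveI : Fact p.Prime := ⟨hp⟩
  have he : ((d : ℕ) : ZMod p) ≠ 0 := by
    rwa [Ne, ZMod.natCast_eq_zero_iff]
  obtain ⟨x, hx1, hx2⟩ := exists_pair_zmod h7 (d : ZMod p) he a b ha hb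
  refine ⟨x.val, ?_, ?_⟩
  · rw [jac_of_val, ZMod.natCast_val, ZMod.cast_id]
    exact hx1
  · rw [jac_of_val]
    push_cast
    rw [ZMod.natCast_val, ZMod.cast_id]
    exact hx2

lemma exists_nonresidue {p : ℕ} (hp : p.Prime) (hodd : p ≠ 2) :
    ∃ a : ℕ, jacobiSym (a : ℤ) p = -1 := by
  haveI : Fact p.Prime := ⟨hp⟩
  have hF : ringChar (ZMod p) ≠ 2 := by rwa [ZMod.ringChar_zmod_n]
  obtain ⟨a, ha⟩ := quadraticChar_exists_neg_one hF
  exact ⟨a.val, by rw [jac_of_val, ZMod.natCast_val, ZMod.cast_id]; exact ha⟩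

lemma JP_dvd {p : ℕ} (hp : p.Prime) (hodd : p ≠ 2) {d : ℕ} (hd : p ∣ d) (s : ℤ)
    (hs : s = 1 ∨ s = -1) : JP p d s s := by
  have hmod : ∀ x : ℕ, (x + d) % p = x % p := by
    intro x
    obtain ⟨c, rfl⟩ := hd
    simp [Nat.add_mul_mod_self_left]
  have key : ∀ x : ℕ, jacobiSym ((x + d : ℕ) : ℤ) p = jacobiSym (x : ℤ) p := by
    intro x
    exact jacobiSym.mod_left' (by rw [← Int.natCast_mod, ← Int.natCast_mod, hmod])
  rcases hs with rfl | rfl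
  · exact ⟨1, jacobiSym.one_left p, by rw [key]; exact jacobiSym.one_left p⟩
  · obtain ⟨a, ha⟩ := exists_nonresidue hp hodd
    exact ⟨a, ha, by rw [key]; exact ha⟩



lemma odd_of_dvd {a b : ℕ} (h : a ∣ b) (hb : Odd b) : Odd a := by
  obtain ⟨c, rfl⟩ := h
  rcases Nat.even_or_odd a with he | ho
  · exact absurd (he.mul_right c) (Nat.not_even_iff_odd.mpr hb)
  · exact ho

lemma peel {m p : ℕ} (hsf : Squarefree m) (hodd : Odd m) (hp : p.Prime) (hdvd : p ∣ m) :
    m = p * (m / p) ∧ Nat.Coprime p (m / p) ∧ Squarefree (m / p) ∧ Odd (m / p) ∧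
      p ≠ 2 ∧ m / p < m ∧ m / p ≠ 0 := by
  have hm0 : m ≠ 0 := hsf.ne_zero
  have heq : m = p * (m / p) := (Nat.mul_div_cancel' hdvd).symm
  have hnd : ¬ p ∣ (m / p) := by
    intro hc
    obtain ⟨c, hc⟩ := hc
    have : p * p ∣ m := ⟨c, by rw [heq, hc]; ring⟩
    exact hp.not_isUnit (hsf p this)
  have hp2 : p ≠ 2 := by
    rintro rfl
    have : Even m := (even_iff_two_dvd).mpr hdvd
    exact (Nat.not_even_iff_odd.mpr hodd) this
  refine ⟨heq, (hp.coprime_iff_not_dvd).mpr hnd, hsf.squarefree_of_dvd (Nat.div_dvd_of_dvd hdvd),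
    odd_of_dvd (Nat.div_dvd_of_dvd hdvd) hodd, hp2, ?_, ?_⟩
  · exact Nat.div_lt_self (Nat.pos_of_ne_zero hm0) hp.one_lt
  · intro hc; rw [hc, mul_zero] at heq; exact hm0 heq

lemma jac_pm_of_not_dvd {p : ℕ} (hp : p.Prime) {a : ℕ} (h : ¬ p ∣ a) :
    jacobiSym (a : ℤ) p = 1 ∨ jacobiSym (a : ℤ) p = -1 := by
  apply jacobiSym.eq_one_or_neg_one
  rw [Int.gcd_natCast_natCast]
  exact (Nat.coprime_comm.mp ((hp.coprime_iff_not_dvd).mpr h))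

lemma S2 (d : ℕ) : ∀ m : ℕ, Squarefree m → Odd m →
    ∃ s t : ℤ, (s = 1 ∨ s = -1) ∧ (t = 1 ∨ t = -1) ∧ JP m d s t := by
  intro m
  induction m using Nat.strong_induction_on with
  | _ m ih =>
    intro hsf hodd
    rcases eq_or_ne m 1 with rfl | hm1
    · exact ⟨1, 1, Or.inl rfl, Or.inl rfl, 1, jacobiSym.one_right _, jacobiSym.one_right _⟩
    · obtain ⟨p, hp, hdvd⟩ := Nat.exists_prime_and_dvd hm1
      obtain ⟨heq, hcop, hsf', hodd', hp2, hlt, hne⟩ := peel hsf hodd hp hdvd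
      obtain ⟨s', t', hs', ht', hJP'⟩ := ih (m / p) hlt hsf' hodd'
      have hp3 : 3 ≤ p := by have := hp.two_le; omega
      obtain ⟨a, ha1, ha2⟩ : ∃ a : ℕ, ¬ p ∣ a ∧ ¬ p ∣ (a + d) := by
        by_cases h1 : p ∣ (1 + d)
        · refine ⟨2, fun hc => ?_, fun hc => ?_⟩
          · have := Nat.le_of_dvd (by norm_num) hc; omega
          · have h3 := Nat.dvd_sub hc h1
            have h4 : 2 + d - (1 + d) = 1 := by omega
            rw [h4] at h3
            have := Nat.le_of_dvd one_pos h3; omega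
        · refine ⟨1, fun hc => ?_, h1⟩
          have := Nat.le_of_dvd one_pos hc; omega
      have hu1 : jacobiSym (a : ℤ) p = 1 ∨ jacobiSym (a : ℤ) p = -1 :=
        jac_pm_of_not_dvd hp ha1
      have hu2 : jacobiSym ((a + d : ℕ) : ℤ) p = 1 ∨ jacobiSym ((a + d : ℕ) : ℤ) p = -1 :=
        jac_pm_of_not_dvd hp ha2
      refine ⟨jacobiSym (a : ℤ) p * s', jacobiSym ((a + d : ℕ) : ℤ) p * t',
        by rcases hu1 with h | h <;> rcases hs' with rfl | rfl <;> rw [h] <;> norm_num,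
        by rcases hu2 with h | h <;> rcases ht' with rfl | rfl <;> rw [h] <;> norm_num, ?_⟩
      rw [heq]
      exact JP.mul hcop hp.pos.ne' hne ⟨a, rfl, rfl⟩ hJP'




instance fact5 : Fact (Nat.Prime 5) := ⟨by norm_num⟩
instance fact3 : Fact (Nat.Prime 3) := ⟨by norm_num⟩

lemma jac5_1 : jacobiSym ((1 : ℕ) : ℤ) 5 = 1 := by norm_num
lemma jac5_2 : jacobiSym ((2 : ℕ) : ℤ) 5 = -1 := by
  rw [← jacobiSym.legendreSym.to_jacobiSym, legendreSym.eq_neg_one_iff]; decide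
lemma jac5_3 : jacobiSym ((3 : ℕ) : ℤ) 5 = -1 := by
  rw [← jacobiSym.legendreSym.to_jacobiSym, legendreSym.eq_neg_one_iff]; decide
lemma jac5_4 : jacobiSym ((4 : ℕ) : ℤ) 5 = 1 := by
  rw [← jacobiSym.legendreSym.to_jacobiSym]
  exact (legendreSym.eq_one_iff 5 (by decide)).mpr (by decide)
lemma jac5_0 : jacobiSym ((0 : ℕ) : ℤ) 5 = 0 := by
  rw [← jacobiSym.legendreSym.to_jacobiSym]
  exact (legendreSym.eq_zero_iff 5 0).mpr (by decide)
lemma jac3_1 : jacobiSym ((1 : ℕ) : ℤ) 3 = 1 := by norm_num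
lemma jac3_2 : jacobiSym ((2 : ℕ) : ℤ) 3 = -1 := by
  rw [← jacobiSym.legendreSym.to_jacobiSym, legendreSym.eq_neg_one_iff]; decide
lemma jac3_0 : jacobiSym ((0 : ℕ) : ℤ) 3 = 0 := by
  rw [← jacobiSym.legendreSym.to_jacobiSym]
  exact (legendreSym.eq_zero_iff 3 0).mpr (by decide)

lemma JP5_mixed {d : ℕ} (hd : d % 5 ≠ 0) : JP 5 d 1 (-1) ∧ JP 5 d (-1) 1 := by
  have h5 : d % 5 = 1 ∨ d % 5 = 2 ∨ d % 5 = 3 ∨ d % 5 = 4 := by omega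
  rcases h5 with h | h | h | h
  · exact ⟨JP_of 5 d 1 _ _ jac5_1 (by rw [show (1 + d) % 5 = 2 by omega]; exact jac5_2),
      JP_of 5 d 3 _ _ jac5_3 (by rw [show (3 + d) % 5 = 4 by omega]; exact jac5_4)⟩
  · exact ⟨JP_of 5 d 1 _ _ jac5_1 (by rw [show (1 + d) % 5 = 3 by omega]; exact jac5_3),
      JP_of 5 d 2 _ _ jac5_2 (by rw [show (2 + d) % 5 = 4 by omega]; exact jac5_4)⟩
  · exact ⟨JP_of 5 d 4 _ _ jac5_4 (by rw [show (4 + d) % 5 = 2 by omega]; exact jac5_2),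
      JP_of 5 d 3 _ _ jac5_3 (by rw [show (3 + d) % 5 = 1 by omega]; exact jac5_1)⟩
  · exact ⟨JP_of 5 d 4 _ _ jac5_4 (by rw [show (4 + d) % 5 = 3 by omega]; exact jac5_3),
      JP_of 5 d 2 _ _ jac5_2 (by rw [show (2 + d) % 5 = 1 by omega]; exact jac5_1)⟩

lemma JP5_nn {d : ℕ} (hd : d % 5 = 1 ∨ d % 5 = 4) : JP 5 d (-1) (-1) := by
  rcases hd with h | h
  · exact JP_of 5 d 2 _ _ jac5_2 (by rw [show (2 + d) % 5 = 3 by omega]; exact jac5_3)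
  · exact JP_of 5 d 3 _ _ jac5_3 (by rw [show (3 + d) % 5 = 2 by omega]; exact jac5_2)

lemma JP5_pp {d : ℕ} (hd : d % 5 = 2 ∨ d % 5 = 3) : JP 5 d 1 1 := by
  rcases hd with h | h
  · exact JP_of 5 d 4 _ _ jac5_4 (by rw [show (4 + d) % 5 = 1 by omega]; exact jac5_1)
  · exact JP_of 5 d 1 _ _ jac5_1 (by rw [show (1 + d) % 5 = 4 by omega]; exact jac5_4)

lemma JP3_mixed {d : ℕ} (hd : ¬ 3 ∣ d) : JP 3 d 1 (-1) ∨ JP 3 d (-1) 1 := by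
  have h3 : d % 3 = 1 ∨ d % 3 = 2 := by omega
  rcases h3 with h | h
  · exact Or.inl (JP_of 3 d 1 _ _ jac3_1 (by rw [show (1 + d) % 3 = 2 by omega]; exact jac3_2))
  · exact Or.inr (JP_of 3 d 2 _ _ jac3_2 (by rw [show (2 + d) % 3 = 1 by omega]; exact jac3_1))



lemma seven_le {p : ℕ} (hp : p.Prime) (h2 : p ≠ 2) (h3 : p ≠ 3) (h5 : p ≠ 5) : 7 ≤ p := by
  by_contra h
  push_neg at h
  have hge := hp.two_le
  interval_cases p <;>
    first
      | exact absurd rfl h2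
      | exact absurd rfl h3
      | exact absurd rfl h5
      | exact absurd hp (by decide)

lemma AV (d : ℕ) : ∀ m : ℕ, 1 < m → Odd m → Squarefree m → ∀ c : ℤ, (c = 1 ∨ c = -1) →
    ∃ s t : ℤ, (s = 1 ∨ s = -1) ∧ (t = 1 ∨ t = -1) ∧ ¬(s = c ∧ t = c) ∧ JP m d s t := by
  intro m hm1 hodd hsf c hc
  by_cases hq : ∃ q, q.Prime ∧ q ∣ m ∧ (q ∣ d ∨ q ≠ 3)
  · obtain ⟨q, hq, hqm, hqd3⟩ := hq
    obtain ⟨heq, hcop, hsf', hodd', hq2, _, hne'⟩ := peel hsf hodd hq hqm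
    obtain ⟨s', t', hs', ht', hJP'⟩ := S2 d (m / q) hsf' hodd'
    have hPP : (JP q d 1 1 ∧ JP q d (-1) (-1)) ∨ (JP q d 1 (-1) ∧ JP q d (-1) 1) := by
      by_cases hdd : q ∣ d
      · exact Or.inl ⟨JP_dvd hq hq2 hdd 1 (Or.inl rfl), JP_dvd hq hq2 hdd (-1) (Or.inr rfl)⟩
      · have hq3 : q ≠ 3 := hqd3.resolve_left hdd
        by_cases hq5 : q = 5
        · subst hq5
          have h50 : d % 5 ≠ 0 := fun h => hdd (Nat.dvd_of_mod_eq_zero h)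
          exact Or.inr (JP5_mixed h50)
        · exact Or.inr ⟨JP_big hq (seven_le hq hq2 hq3 hq5) d hdd 1 (-1) (Or.inl rfl) (Or.inr rfl),
            JP_big hq (seven_le hq hq2 hq3 hq5) d hdd (-1) 1 (Or.inr rfl) (Or.inl rfl)⟩
    rcases hPP with ⟨hP1, hP2⟩ | ⟨hP1, hP2⟩
    · by_cases h : s' = c ∧ t' = c
      · refine ⟨(-1) * s', (-1) * t',
          by rcases hs' with rfl | rfl <;> norm_num,
          by rcases ht' with rfl | rfl <;> norm_num, ?_, ?_⟩
        · rintro ⟨h1, h2⟩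
          rw [h.1] at h1
          rcases hc with rfl | rfl <;> norm_num at h1
        · rw [heq]; exact JP.mul hcop hq.pos.ne' hne' hP2 hJP'
      · refine ⟨1 * s', 1 * t',
          by rcases hs' with rfl | rfl <;> norm_num,
          by rcases ht' with rfl | rfl <;> norm_num, ?_, ?_⟩
        · rintro ⟨h1, h2⟩
          exact h ⟨by linarith, by linarith⟩
        · rw [heq]; exact JP.mul hcop hq.pos.ne' hne' hP1 hJP'
    · by_cases h : s' = c
      · refine ⟨(-1) * s', 1 * t',
          by rcases hs' with rfl | rfl <;> norm_num,
          by rcases ht' with rfl | rfl <;> norm_num, ?_, ?_⟩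
        · rintro ⟨h1, h2⟩
          rw [h] at h1
          rcases hc with rfl | rfl <;> norm_num at h1
        · rw [heq]; exact JP.mul hcop hq.pos.ne' hne' hP2 hJP'
      · refine ⟨1 * s', (-1) * t',
          by rcases hs' with rfl | rfl <;> norm_num,
          by rcases ht' with rfl | rfl <;> norm_num, ?_, ?_⟩
        · rintro ⟨h1, h2⟩
          exact h (by linarith)
        · rw [heq]; exact JP.mul hcop hq.pos.ne' hne' hP1 hJP'
  · push_neg at hq
    obtain ⟨q0, hq0, hq0m⟩ := Nat.exists_prime_and_dvd (by omega : m ≠ 1)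
    obtain ⟨hnd0, hq03⟩ := hq q0 hq0 hq0m
    subst hq03
    obtain ⟨heq, hcop, hsf', hodd', _, _, hne'⟩ := peel hsf hodd hq0 hq0m
    have hm3 : m = 3 := by
      rcases eq_or_ne (m / 3) 1 with h1 | h1
      · rw [heq, h1]
      · obtain ⟨q1, hq1, hq1m⟩ := Nat.exists_prime_and_dvd h1
        have hq1m' : q1 ∣ m := hq1m.trans (Nat.div_dvd_of_dvd hq0m)
        obtain ⟨-, hq13⟩ := hq q1 hq1 hq1m'
        subst hq13
        have h3g : (3:ℕ) ∣ Nat.gcd 3 (m / 3) := Nat.dvd_gcd dvd_rfl hq1m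
        rw [Nat.Coprime] at hcop
        rw [hcop] at h3g
        exact absurd (Nat.le_of_dvd one_pos h3g) (by norm_num)
    subst hm3
    rcases JP3_mixed hnd0 with hP | hP
    · exact ⟨1, -1, Or.inl rfl, Or.inr rfl, fun ⟨h1, h2⟩ => by
        rcases hc with rfl | rfl <;> omega, hP⟩
    · exact ⟨-1, 1, Or.inr rfl, Or.inl rfl, fun ⟨h1, h2⟩ => by
        rcases hc with rfl | rfl <;> omega, hP⟩



lemma JP_one {m d : ℕ} (hmd : m ∣ d) : JP m d 1 1 := by
  refine ⟨1, by norm_num, ?_⟩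
  have h : (1 + d) % m = 1 % m := by
    obtain ⟨c, rfl⟩ := hmd
    simp [Nat.add_mul_mod_self_left]
  rw [jac_congr h]
  norm_num

lemma exists_witness (g d : ℕ) (hg1 : 1 < g) (hodd : Odd g) (hsf : Squarefree g)
    (h5 : ¬(g = 5 ∧ (d % 5 = 2 ∨ d % 5 = 3))) (hcase : g ∣ d ∨ ¬ g ∣ 3 * d) :
    ∃ x : ℕ, jacobiSym (x : ℤ) g = -1 ∧ jacobiSym ((x + d : ℕ) : ℤ) g = -1 := by
  rcases hcase with hgd | hg3d
  · -- g ∣ d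
    obtain ⟨p, hp, hpg⟩ := Nat.exists_prime_and_dvd (by omega : g ≠ 1)
    obtain ⟨heq, hcop, hsf', hodd', hp2, _, hne'⟩ := peel hsf hodd hp hpg
    have hP1 : JP p d (-1) (-1) := JP_dvd hp hp2 (hpg.trans hgd) (-1) (Or.inr rfl)
    have hP2 : JP (g / p) d 1 1 := JP_one ((Nat.div_dvd_of_dvd hpg).trans hgd)
    have := JP.mul hcop hp.pos.ne' hne' hP1 hP2
    rw [← heq] at this
    norm_num at this
    obtain ⟨x, hx1, hx2⟩ := this
    exact ⟨x, hx1, hx2⟩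
  · -- there is a prime p ∣ g with ¬ p ∣ 3d
    obtain ⟨p, hpf, hp3d⟩ : ∃ p ∈ g.primeFactors, ¬ p ∣ 3 * d := by
      by_contra h
      push_neg at h
      apply hg3d
      have hprod : ∏ q ∈ g.primeFactors, q ∣ 3 * d :=
        Finset.prod_primes_dvd _ (fun q hqf => (Nat.prime_of_mem_primeFactors hqf).prime) h
      rwa [Nat.prod_primeFactors_of_squarefree hsf] at hprod
    have hp : p.Prime := Nat.prime_of_mem_primeFactors hpf
    have hpg : p ∣ g := Nat.dvd_of_mem_primeFactors hpf
    have hpd : ¬ p ∣ d := fun h => hp3d (h.mul_left 3)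
    have hp3 : p ≠ 3 := fun h => hp3d (h ▸ Dvd.intro d rfl)
    obtain ⟨heq, hcop, hsf', hodd', hp2, _, hne'⟩ := peel hsf hodd hp hpg
    by_cases hp5 : p = 5
    · subst hp5
      have h50 : d % 5 ≠ 0 := fun h => hpd (Nat.dvd_of_mod_eq_zero h)
      by_cases hm1 : g / 5 = 1
      · -- g = 5
        have hg5 : g = 5 := by rw [heq, hm1, mul_one]
        have hd14 : d % 5 = 1 ∨ d % 5 = 4 := by
          have : ¬ (d % 5 = 2 ∨ d % 5 = 3) := fun hh => h5 ⟨hg5, hh⟩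
          omega
        obtain ⟨x, hx1, hx2⟩ := JP5_nn hd14
        exact ⟨x, by rw [hg5]; exact hx1, by rw [hg5]; exact hx2⟩
      · have hm2 : 1 < g / 5 := by
          rcases Nat.lt_or_ge (g / 5) 2 with h | h
          · interval_cases (g / 5) <;> simp_all
          · omega
        by_cases h14 : d % 5 = 1 ∨ d % 5 = 4
        · obtain ⟨s, t, hs, ht, hnc, hJP⟩ := AV d (g / 5) hm2 hodd' hsf' (-1) (Or.inr rfl)
          have hP5 : JP 5 d (-s) (-t) := by
            rcases hs with rfl | rfl <;> rcases ht with rfl | rfl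
            · norm_num; exact JP5_nn h14
            · norm_num; exact (JP5_mixed h50).2
            · norm_num; exact (JP5_mixed h50).1
            · exact absurd ⟨rfl, rfl⟩ hnc
          have := JP.mul hcop (by norm_num) hne' hP5 hJP
          rw [← heq] at this
          have hss : -s * s = -1 := by rcases hs with rfl | rfl <;> norm_num
          have htt : -t * t = -1 := by rcases ht with rfl | rfl <;> norm_num
          rw [hss, htt] at this
          exact this
        · have h23 : d % 5 = 2 ∨ d % 5 = 3 := by omega
          obtain ⟨s, t, hs, ht, hnc, hJP⟩ := AV d (g / 5) hm2 hodd' hsf' 1 (Or.inl rfl)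
          have hP5 : JP 5 d (-s) (-t) := by
            rcases hs with rfl | rfl <;> rcases ht with rfl | rfl
            · exact absurd ⟨rfl, rfl⟩ hnc
            · norm_num; exact (JP5_mixed h50).2
            · norm_num; exact (JP5_mixed h50).1
            · norm_num; exact JP5_pp h23
          have := JP.mul hcop (by norm_num) hne' hP5 hJP
          rw [← heq] at this
          have hss : -s * s = -1 := by rcases hs with rfl | rfl <;> norm_num
          have htt : -t * t = -1 := by rcases ht with rfl | rfl <;> norm_num
          rw [hss, htt] at this
          exact this
    · have h7 : 7 ≤ p := seven_le hp hp2 hp3 hp5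
      obtain ⟨s, t, hs, ht, hJP⟩ := S2 d (g / p) hsf' hodd'
      have hPp : JP p d (-s) (-t) := JP_big hp h7 d hpd (-s) (-t)
        (by rcases hs with rfl | rfl <;> norm_num)
        (by rcases ht with rfl | rfl <;> norm_num)
      have := JP.mul hcop hp.pos.ne' hne' hPp hJP
      rw [← heq] at this
      have hss : -s * s = -1 := by rcases hs with rfl | rfl <;> norm_num
      have htt : -t * t = -1 := by rcases ht with rfl | rfl <;> norm_num
      rw [hss, htt] at this
      exact this

theorem stmt_9 (g d : ℕ) (hg : 0 < g) (hgodd : Odd g) (hgsf : Squarefree g)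
    (hd : 0 < d) (hde : Even d) :
    (((Finset.Icc 1 g).filter
        (fun α : ℕ => jacobiSym (α : ℤ) g = -1 ∧ jacobiSym ((α : ℤ) + d) g = -1)).card = 0
      ↔ (g = 1 ∨ (g = 5 ∧ (d % 5 = 2 ∨ d % 5 = 3)) ∨ (¬ g ∣ d ∧ g ∣ 3 * d))) := by
  rw [Finset.card_eq_zero, Finset.filter_eq_empty_iff]
  constructor
  · -- if empty then one of the conditions
    intro h
    by_contra hR
    push_neg at hR
    obtain ⟨hg1, h5, hCD⟩ := hR
    have hg1' : 1 < g := by omega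
    have hcase : g ∣ d ∨ ¬ g ∣ 3 * d := by
      by_cases h1 : g ∣ d
      · exact Or.inl h1
      · exact Or.inr (fun h2 => absurd h2 (hCD h1))
    obtain ⟨x, hx1, hx2⟩ := exists_witness g d hg1' hgodd hgsf
      (by rintro ⟨rfl, hh⟩; obtain ⟨ha, hb⟩ := h5 rfl; rcases hh with h | h; exacts [ha h, hb h]) hcase
    have hx0 : x % g ≠ 0 := by
      intro h0
      have : jacobiSym ((x : ℕ) : ℤ) g = jacobiSym ((0 : ℕ) : ℤ) g :=
        jac_congr (a := x) (b := 0) (by rw [Nat.zero_mod]; exact h0)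
      rw [hx1] at this
      rw [show ((0:ℕ):ℤ) = (0:ℤ) by norm_num, jacobiSym.zero_left hg1'] at this
      norm_num at this
    have hmem : x % g ∈ Finset.Icc 1 g := by
      rw [Finset.mem_Icc]
      have := Nat.mod_lt x (by omega : 0 < g)
      omega
    apply h hmem
    constructor
    · rw [jac_congr (a := x % g) (b := x) (Nat.mod_mod_of_dvd x dvd_rfl)]
      exact hx1
    · rw [show ((x % g : ℕ) : ℤ) + (d : ℤ) = (((x % g) + d : ℕ) : ℤ) by push_cast; ring]
      rw [jac_congr (a := x % g + d) (b := x + d) ((Nat.mod_modEq x g).add_right d)]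
      exact hx2
  · -- the conditions imply emptiness
    intro hR α hα
    rintro ⟨h1, h2⟩
    rw [show ((α : ℤ) + (d : ℤ)) = ((α + d : ℕ) : ℤ) by push_cast; ring] at h2
    rcases hR with rfl | ⟨rfl, hd5⟩ | ⟨hCd, hC3d⟩
    · rw [jacobiSym.one_right] at h1
      norm_num at h1
    · -- g = 5
      rw [jac_congr (a := α) (b := α % 5) (Nat.mod_mod_of_dvd α dvd_rfl).symm] at h1
      rw [jac_congr (a := α + d) (b := (α + d) % 5) (Nat.mod_mod_of_dvd _ dvd_rfl).symm] at h2
      rcases hd5 with hd2 | hd2 <;>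
        rcases (by omega : α % 5 = 0 ∨ α % 5 = 1 ∨ α % 5 = 2 ∨ α % 5 = 3 ∨ α % 5 = 4)
          with h | h | h | h | h <;>
        rw [h] at h1 <;>
        first
          | (rw [jac5_0] at h1; norm_num at h1)
          | (rw [jac5_1] at h1; norm_num at h1)
          | (rw [jac5_4] at h1; norm_num at h1)
          | (rw [show (α + d) % 5 = 4 by omega, jac5_4] at h2; norm_num at h2)
          | (rw [show (α + d) % 5 = 0 by omega, jac5_0] at h2; norm_num at h2)
          | (rw [show (α + d) % 5 = 1 by omega, jac5_1] at h2; norm_num at h2)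
    · -- ¬ g ∣ d ∧ g ∣ 3 * d
      have h3g : 3 ∣ g := by
        by_contra h3g
        have hcop : Nat.Coprime g 3 :=
          Nat.coprime_comm.mp (((Nat.prime_three).coprime_iff_not_dvd).mpr h3g)
        exact hCd (hcop.dvd_of_dvd_mul_left hC3d)
      obtain ⟨heq, hcop3, hsf', _, _, _, hm0⟩ := peel hgsf hgodd Nat.prime_three h3g
      set m := g / 3 with hm
      have hmd : m ∣ d := by
        rw [heq] at hC3d
        exact (Nat.mul_dvd_mul_iff_left (by norm_num : 0 < 3)).mp hC3d
      have h3d : ¬ 3 ∣ d := by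
        intro h3d
        exact hCd (heq ▸ Nat.Coprime.mul_dvd_of_dvd_of_dvd hcop3 h3d hmd)
      rw [heq, jacobiSym.mul_right' _ (by norm_num) hm0] at h1 h2
      have hJm : jacobiSym ((α + d : ℕ) : ℤ) m = jacobiSym (α : ℤ) m := by
        apply jac_congr
        have : (α + d) ≡ α + 0 [MOD m] :=
          Nat.ModEq.add_left α ((Nat.modEq_zero_iff_dvd).mpr hmd)
        exact this
      rw [hJm] at h2
      have hw : jacobiSym (α : ℤ) m ≠ 0 := by
        intro h0
        rw [h0, mul_zero] at h1
        norm_num at h1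
      have huv : jacobiSym (α : ℤ) 3 = jacobiSym ((α + d : ℕ) : ℤ) 3 :=
        mul_right_cancel₀ hw (h1.trans h2.symm)
      have hu : jacobiSym (α : ℤ) 3 = jacobiSym ((α % 3 : ℕ) : ℤ) 3 :=
        jac_congr (Nat.mod_mod_of_dvd α dvd_rfl).symm
      have hv : jacobiSym ((α + d : ℕ) : ℤ) 3 = jacobiSym (((α + d) % 3 : ℕ) : ℤ) 3 :=
        jac_congr (Nat.mod_mod_of_dvd _ dvd_rfl).symm
      have hd3' : d % 3 ≠ 0 := fun h => h3d (Nat.dvd_of_mod_eq_zero h)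
      rcases (by omega : α % 3 = 0 ∨ α % 3 = 1 ∨ α % 3 = 2) with h | h | h <;>
        rcases (by omega : (α + d) % 3 = 0 ∨ (α + d) % 3 = 1 ∨ (α + d) % 3 = 2)
          with h' | h' | h' <;>
        rw [h] at hu <;> rw [h'] at hv <;>
        first
          | omega
          | (rw [hu, jac3_0, mul_comm] at h1; norm_num at h1)
          | (rw [hv, jac3_0, mul_comm] at h2; norm_num at h2)
          | (rw [hu, hv, jac3_1, jac3_2] at huv; norm_num at huv)
          | (rw [hu, hv, jac3_2, jac3_1] at huv; norm_num at huv)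
end

section
/- For a prime p and integer g with p ∤ g, the indicator function of g being a primitive root mod p satisfies: f(g) = (φ(p-1)/(p-1))·Σ_{k | p-1} (μ(k)/φ(k))·Σ_{χ of order k} χ(g), where the inner sum runs over Dirichlet characters mod p of order exactly k. -/
open ArithmeticFunction Finset

lemma totient_complex (n : ℕ) :
    (n.totient : ℂ) = n * ∏ q ∈ n.primeFactors, (1 - (q:ℂ)⁻¹) := by
  have h := Nat.totient_eq_mul_prod_factors n
  have h2 := congrArg (Rat.cast (K := ℂ)) h
  push_cast at h2
  exact h2


lemma lemG (M k : ℕ) (hM : M ≠ 0) (hk : k ≠ 0) :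
    ∑ e ∈ M.divisors.filter (fun e => Nat.Coprime e k), (moebius e : ℂ)/e
      = ∏ q ∈ M.primeFactors \ k.primeFactors, (1 - (q:ℂ)⁻¹) := by
  classical
  set f : ℕ → ℂ := fun e => if Nat.Coprime e k then (moebius e : ℂ)/e else 0 with hf
  have h1 : ∑ e ∈ M.divisors.filter (fun e => Nat.Coprime e k), (moebius e : ℂ)/e
      = ∑ e ∈ M.divisors, f e := by
    rw [hf, Finset.sum_filter]
  have h2 : ∑ e ∈ M.divisors, f e = ∑ e ∈ M.divisors.filter Squarefree, f e := by
    rw [Finset.sum_filter_of_ne]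
    intro x hx hfx
    by_contra hsq
    have : moebius x = 0 := moebius_eq_zero_of_not_squarefree hsq
    apply hfx
    simp [hf, this]
  rw [h1, h2, Nat.sum_divisors_filter_squarefree hM, Nat.factors_eq]
  have hstep : ∀ t ∈ M.primeFactorsList.toFinset.powerset,
      f (Multiset.prod t.val)
        = if t ⊆ M.primeFactors \ k.primeFactors then ∏ q ∈ t, (-(q:ℂ)⁻¹) else 0 := by
    intro t ht
    rw [Finset.mem_powerset] at ht
    have ht' : t ⊆ M.primeFactors := by rwa [Nat.toFinset_factors] at ht
    have hprod : Multiset.prod t.val = ∏ q ∈ t, q := by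
      rw [Finset.prod_val]; simp [Function.id_def]
    have hprime : ∀ q ∈ t, Nat.Prime q := fun q hq => Nat.prime_of_mem_primeFactors (ht' hq)
    have hcop : Nat.Coprime (∏ q ∈ t, q) k ↔ t ⊆ M.primeFactors \ k.primeFactors := by
      rw [Nat.coprime_prod_left_iff]
      constructor
      · intro h q hq
        rw [Finset.mem_sdiff]
        refine ⟨ht' hq, fun hqk => ?_⟩
        have := (Nat.Prime.coprime_iff_not_dvd (hprime q hq)).mp (h q hq)
        exact this (Nat.dvd_of_mem_primeFactors hqk)
      · intro h q hq
        rw [Nat.Prime.coprime_iff_not_dvd (hprime q hq)]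
        intro hdvd
        have := h hq
        rw [Finset.mem_sdiff] at this
        exact this.2 (Nat.mem_primeFactors.mpr ⟨hprime q hq, hdvd, hk⟩)
    have hval : (moebius (∏ q ∈ t, q) : ℂ) / ((∏ q ∈ t, q : ℕ) : ℂ)
        = ∏ q ∈ t, (-(q:ℂ)⁻¹) := by
      rw [isMultiplicative_moebius.map_prod_of_subset_primeFactors M t ht']
      push_cast
      rw [← Finset.prod_div_distrib]
      refine Finset.prod_congr rfl fun q hq => ?_
      rw [moebius_apply_prime (hprime q hq)]
      push_cast
      rw [neg_div, one_div]
    rw [hprod, hf]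
    simp only [hcop]
    split_ifs with hc
    · exact hval
    · rfl
  have hfix : ((↑M.primeFactorsList : Multiset ℕ)).toFinset = M.primeFactorsList.toFinset := by
    simp
  rw [hfix, Finset.sum_congr rfl hstep, ← Finset.sum_filter]
  have hsets : (M.primeFactorsList.toFinset.powerset).filter
      (fun t => t ⊆ M.primeFactors \ k.primeFactors) = (M.primeFactors \ k.primeFactors).powerset := by
    ext t
    simp only [Finset.mem_filter, Finset.mem_powerset, Nat.toFinset_factors]
    exact ⟨fun h => h.2, fun h => ⟨h.trans Finset.sdiff_subset, h⟩⟩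
  rw [hsets]
  rw [show (∏ q ∈ M.primeFactors \ k.primeFactors, (1 - (q:ℂ)⁻¹))
      = ∏ q ∈ M.primeFactors \ k.primeFactors, (-(q:ℂ)⁻¹ + 1) by
    refine Finset.prod_congr rfl fun q _ => by ring]
  rw [Finset.prod_add]
  refine Finset.sum_congr rfl fun t ht => ?_
  simp

lemma lemA (n k : ℕ) (hn : n ≠ 0) (hk : k ∣ n) :
    ((n.totient : ℂ)/n) * ((moebius k : ℂ) / (k.totient : ℂ))
      = ∑ d ∈ n.divisors.filter (fun d => k ∣ d), (moebius d : ℂ)/d := by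
  classical
  have hk0 : k ≠ 0 := fun h => hn (by simpa [h] using hk)
  have hnk0 : n / k ≠ 0 := (Nat.div_ne_zero_iff_of_dvd hk).mpr ⟨hn, hk0⟩
  -- reindex
  have hreindex : ∑ d ∈ n.divisors.filter (fun d => k ∣ d), (moebius d : ℂ)/d
      = ∑ e ∈ (n / k).divisors, (moebius (k * e) : ℂ)/(k * e) := by
    refine Finset.sum_nbij' (fun d => d / k) (fun e => k * e) ?_ ?_ ?_ ?_ ?_
    · intro d hd
      simp only [Finset.mem_filter, Nat.mem_divisors] at hd
      obtain ⟨⟨hdn, _⟩, hkd⟩ := hd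
      rw [Nat.mem_divisors]
      obtain ⟨e, rfl⟩ := hkd
      have hce : k * e / k = e := Nat.mul_div_cancel_left e (Nat.pos_of_ne_zero hk0)
      simp only [hce]
      exact ⟨(Nat.dvd_div_iff_mul_dvd hk).mpr hdn, hnk0⟩
    · intro e he
      rw [Nat.mem_divisors] at he
      simp only [Finset.mem_filter, Nat.mem_divisors]
      exact ⟨⟨(Nat.dvd_div_iff_mul_dvd hk).mp he.1, hn⟩, dvd_mul_right k e⟩
    · intro d hd
      simp only [Finset.mem_filter] at hd
      exact Nat.mul_div_cancel' hd.2
    · intro e he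
      exact Nat.mul_div_cancel_left e (Nat.pos_of_ne_zero hk0)
    · intro d hd
      simp only [Finset.mem_filter] at hd
      rw [show ((k:ℂ) * ((d / k : ℕ):ℂ)) = ((k * (d/k) : ℕ) : ℂ) by push_cast; ring,
        Nat.mul_div_cancel' hd.2]
  rw [hreindex]
  -- restrict to coprime
  have hcop : ∑ e ∈ (n / k).divisors, (moebius (k * e) : ℂ)/(k * e)
      = ∑ e ∈ (n / k).divisors.filter (fun e => Nat.Coprime e k),
          (moebius (k * e) : ℂ)/(k * e) := by
    rw [Finset.sum_filter_of_ne]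
    intro e he hne
    by_contra hnc
    apply hne
    have : ¬ Squarefree (k * e) := by
      obtain ⟨q, hq, hqd⟩ := Nat.exists_prime_and_dvd (fun h1 : Nat.gcd e k = 1 => hnc h1)
      have hqe : q ∣ e := hqd.trans (Nat.gcd_dvd_left e k)
      have hqk : q ∣ k := hqd.trans (Nat.gcd_dvd_right e k)
      intro hsq
      exact hq.one_lt.ne' (Nat.isUnit_iff.mp (hsq q (mul_dvd_mul hqk hqe)))
    rw [show ((k:ℂ) * (e:ℂ)) = ((k * e : ℕ) : ℂ) by push_cast; ring,
      moebius_eq_zero_of_not_squarefree this]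
    simp
  rw [hcop]
  -- multiplicativity
  have hmul : ∀ e ∈ (n / k).divisors.filter (fun e => Nat.Coprime e k),
      (moebius (k * e) : ℂ)/(k * e) = ((moebius k : ℂ)/k) * ((moebius e : ℂ)/e) := by
    intro e he
    simp only [Finset.mem_filter] at he
    rw [isMultiplicative_moebius.map_mul_of_coprime he.2.symm]
    push_cast
    rw [div_mul_div_comm]
  rw [Finset.sum_congr rfl hmul, ← Finset.mul_sum, lemG (n/k) k hnk0 hk0]
  -- prime factor sets
  have hpf : (n / k).primeFactors \ k.primeFactors = n.primeFactors \ k.primeFactors := by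
    have : n = k * (n / k) := (Nat.mul_div_cancel' hk).symm
    ext q
    simp only [Finset.mem_sdiff]
    constructor
    · rintro ⟨h1, h2⟩
      exact ⟨Nat.primeFactors_mono (Nat.div_dvd_of_dvd hk) hn h1, h2⟩
    · rintro ⟨h1, h2⟩
      refine ⟨?_, h2⟩
      rw [this, Nat.primeFactors_mul hk0 hnk0] at h1
      rcases Finset.mem_union.mp h1 with h | h
      · exact absurd h h2
      · exact h
  rw [hpf]
  -- final computation
  have hksub : k.primeFactors ⊆ n.primeFactors := Nat.primeFactors_mono hk hn
  have hprod : (∏ q ∈ k.primeFactors, (1 - (q:ℂ)⁻¹))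
      * (∏ q ∈ n.primeFactors \ k.primeFactors, (1 - (q:ℂ)⁻¹))
      = ∏ q ∈ n.primeFactors, (1 - (q:ℂ)⁻¹) := by
    rw [mul_comm]
    exact Finset.prod_sdiff hksub
  have hne : ∀ q ∈ n.primeFactors, (1 - (q:ℂ)⁻¹) ≠ 0 := by
    intro q hq
    have h2 : 2 ≤ q := (Nat.prime_of_mem_primeFactors hq).two_le
    have hq1 : (q:ℂ) ≠ 1 := by exact_mod_cast (by omega : q ≠ 1)
    rw [sub_ne_zero]
    intro h
    exact hq1 (inv_eq_one.mp h.symm)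
  have hPk : (∏ q ∈ k.primeFactors, (1 - (q:ℂ)⁻¹)) ≠ 0 :=
    Finset.prod_ne_zero_iff.mpr fun q hq => hne q (hksub hq)
  have hn0 : (n:ℂ) ≠ 0 := Nat.cast_ne_zero.mpr hn
  have hk0' : (k:ℂ) ≠ 0 := Nat.cast_ne_zero.mpr hk0
  rw [totient_complex n, totient_complex k, mul_div_cancel_left₀ _ hn0, ← hprod,
    mul_comm (∏ q ∈ k.primeFactors, (1 - (q:ℂ)⁻¹)) _, mul_assoc, mul_div_assoc',
    mul_comm ((k:ℂ)) (∏ q ∈ k.primeFactors, (1 - (q:ℂ)⁻¹)),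
    mul_div_mul_left _ _ hPk]
  ring


-- number of solutions of x^d = 1 in a cyclic group
lemma lemCard {α : Type*} [CommGroup α] [Fintype α] [DecidableEq α] [IsCyclic α]
    (d : ℕ) (hd : d ∣ Fintype.card α) :
    (univ.filter (fun x : α => x ^ d = 1)).card = d := by
  classical
  have hd0 : d ≠ 0 := by
    rintro rfl
    exact (Fintype.card_ne_zero (α := α)) (Nat.eq_zero_of_zero_dvd hd)
  have h1 : (univ.filter (fun x : α => x ^ d = 1))
      = univ.filter (fun x : α => orderOf x ∣ d) := by
    ext x; simp [orderOf_dvd_iff_pow_eq_one]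
  rw [h1]
  have h2 := Finset.card_eq_sum_card_fiberwise
    (f := fun x : α => orderOf x) (s := univ.filter (fun x : α => orderOf x ∣ d))
    (t := d.divisors) (fun x hx => by
      simp only [Finset.mem_coe, Finset.mem_filter] at hx
      exact Nat.mem_divisors.mpr ⟨hx.2, hd0⟩)
  rw [h2]
  have h3 : ∀ k ∈ d.divisors,
      ((univ.filter (fun x : α => orderOf x ∣ d)).filter (fun x => orderOf x = k)).card
        = k.totient := by
    intro k hk
    rw [Nat.mem_divisors] at hk
    have : (univ.filter (fun x : α => orderOf x ∣ d)).filter (fun x => orderOf x = k)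
        = univ.filter (fun x : α => orderOf x = k) := by
      ext x
      simp only [Finset.mem_filter, Finset.mem_univ, true_and]
      exact ⟨fun h => h.2, fun h => ⟨h ▸ hk.1, h⟩⟩
    rw [this]
    exact IsCyclic.card_orderOf_eq_totient (hk.1.trans hd)
  rw [Finset.sum_congr rfl h3]
  exact Nat.sum_totient d

-- existence of d-th roots in a cyclic group
lemma lemRoot {α : Type*} [CommGroup α] [Fintype α] [IsCyclic α]
    (u : α) (d : ℕ) (hd : d ∣ Fintype.card α) :
    (∃ v : α, v ^ d = u) ↔ orderOf u ∣ Fintype.card α / d := by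
  constructor
  · rintro ⟨v, rfl⟩
    rw [orderOf_dvd_iff_pow_eq_one, ← pow_mul, Nat.mul_div_cancel' hd, pow_card_eq_one]
  · intro hdvd
    obtain ⟨h, hh⟩ := IsCyclic.exists_generator (α := α)
    obtain ⟨s, hs⟩ := (Submonoid.mem_powers_iff u h).mp
      (mem_powers_iff_mem_zpowers.mpr (hh u))
    have hordh : orderOf h = Fintype.card α := by rw [orderOf_eq_card_of_forall_mem_zpowers hh, Nat.card_eq_fintype_card]
    have hn0 : Fintype.card α ≠ 0 := Fintype.card_ne_zero
    have hordu : orderOf u = Fintype.card α / Nat.gcd (Fintype.card α) s := by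
      rw [← hs, orderOf_pow, hordh]
    have hgd : Nat.gcd (Fintype.card α) s ∣ Fintype.card α := Nat.gcd_dvd_left _ _
    rw [hordu] at hdvd
    obtain ⟨t, ht⟩ := hdvd
    have hg0 : Nat.gcd (Fintype.card α) s ≠ 0 := Nat.gcd_ne_zero_left hn0
    have hq0 : Fintype.card α / Nat.gcd (Fintype.card α) s ≠ 0 :=
      (Nat.div_ne_zero_iff_of_dvd hgd).mpr ⟨hn0, hg0⟩
    have e1 : Nat.gcd (Fintype.card α) s * (Fintype.card α / Nat.gcd (Fintype.card α) s)
        = Fintype.card α := Nat.mul_div_cancel' hgd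
    have e2 : d * t * (Fintype.card α / Nat.gcd (Fintype.card α) s) = Fintype.card α := by
      calc d * t * (Fintype.card α / Nat.gcd (Fintype.card α) s)
          = d * (Fintype.card α / Nat.gcd (Fintype.card α) s * t) := by ring
        _ = d * (Fintype.card α / d) := by rw [← ht]
        _ = Fintype.card α := Nat.mul_div_cancel' hd
    have hgdt : Nat.gcd (Fintype.card α) s = d * t :=
      Nat.eq_of_mul_eq_mul_right (Nat.pos_of_ne_zero hq0) (by rw [e1, e2])
    have hds : d ∣ s := (Dvd.intro t hgdt.symm).trans (Nat.gcd_dvd_right _ _)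
    exact ⟨h ^ (s / d), by rw [← pow_mul, Nat.div_mul_cancel hds, hs]⟩


section chars
variable (p : ℕ) [Fact p.Prime]

-- `χ ↦ χ a` for all characters with `χ ^ d = 1` is trivial iff `a` is a d-th power
lemma triv_iff (u : (ZMod p)ˣ) (d : ℕ) :
    (∀ χ : DirichletCharacter ℂ p, χ ^ d = 1 → χ (u : ZMod p) = 1)
      ↔ (∃ v : (ZMod p)ˣ, v ^ d = u) := by
  constructor
  · -- separation argument
    intro H
    by_contra hne
    set R : Subgroup (ZMod p)ˣ := MonoidHom.range (powMonoidHom d : (ZMod p)ˣ →* (ZMod p)ˣ)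
    have hu : u ∉ R := by
      intro hmem
      obtain ⟨v, hv⟩ := MonoidHom.mem_range.mp hmem
      exact hne ⟨v, hv⟩
    haveI : NeZero ((Monoid.exponent ((ZMod p)ˣ ⧸ R) : ℂ)) :=
      ⟨Nat.cast_ne_zero.mpr (Monoid.exponent_ne_zero_of_finite (G := (ZMod p)ˣ ⧸ R))⟩
    have hu1 : ((u : (ZMod p)ˣ ⧸ R) ≠ 1) := by
      rwa [Ne, QuotientGroup.eq_one_iff]
    obtain ⟨φ, hφ⟩ :=
      CommGroup.exists_apply_ne_one_of_hasEnoughRootsOfUnity ((ZMod p)ˣ ⧸ R) ℂ hu1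
    set ξ : DirichletCharacter ℂ p :=
      MulChar.ofUnitHom (φ.comp (QuotientGroup.mk' R)) with hξ
    have hξd : ξ ^ d = 1 := by
      apply MulChar.ext
      intro a
      rw [MulChar.pow_apply_coe, MulChar.one_apply_coe, hξ, MulChar.ofUnitHom_coe]
      have : (φ.comp (QuotientGroup.mk' R)) a ^ d = 1 := by
        rw [← map_pow]
        show φ ((QuotientGroup.mk' R) (a ^ d)) = 1
        rw [show (QuotientGroup.mk' R) (a ^ d) = 1 from
          (QuotientGroup.eq_one_iff _).mpr ⟨a, rfl⟩, map_one]
      rw [← Units.val_pow_eq_pow_val, this, Units.val_one]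
    have : ξ (u : ZMod p) = 1 := H ξ hξd
    rw [hξ, MulChar.ofUnitHom_coe] at this
    exact hφ (Units.ext this)
  · rintro ⟨v, rfl⟩ χ hχ
    have : ((v ^ d : (ZMod p)ˣ) : ZMod p) = ((v : ZMod p)) ^ d := Units.val_pow_eq_pow_val v d
    rw [this, map_pow, ← MulChar.pow_apply_coe, hχ, MulChar.one_apply_coe]

end chars

section sums
variable (p : ℕ) [Fact p.Prime]

lemma Dchar_card : Fintype.card (DirichletCharacter ℂ p) = p - 1 := by
  haveI : NeZero ((Monoid.exponent (ZMod p)ˣ : ℂ)) :=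
    ⟨Nat.cast_ne_zero.mpr (Monoid.exponent_ne_zero_of_finite (G := (ZMod p)ˣ))⟩
  rw [← Nat.card_eq_fintype_card,
    DirichletCharacter.card_eq_totient_of_hasEnoughRootsOfUnity,
    Nat.totient_prime (Fact.out : p.Prime)]

lemma Dchar_cyclic : IsCyclic (DirichletCharacter ℂ p) := by
  haveI : NeZero ((Monoid.exponent (ZMod p)ˣ : ℂ)) :=
    ⟨Nat.cast_ne_zero.mpr (Monoid.exponent_ne_zero_of_finite (G := (ZMod p)ˣ))⟩
  obtain ⟨E⟩ := DirichletCharacter.mulEquiv_units ℂ p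
  exact isCyclic_of_surjective E.symm.toMonoidHom E.symm.surjective

lemma sum_pow_filter (u : (ZMod p)ˣ) (d : ℕ) (hd : d ∣ p - 1) :
    ∑ χ ∈ univ.filter (fun χ : DirichletCharacter ℂ p => χ ^ d = 1), χ (u : ZMod p)
      = if orderOf u ∣ (p-1)/d then (d:ℂ) else 0 := by
  classical
  haveI := Dchar_cyclic p
  have hcard : Fintype.card (DirichletCharacter ℂ p) = p - 1 := Dchar_card p
  have hcardU : Fintype.card (ZMod p)ˣ = p - 1 := by
    rw [ZMod.card_units_eq_totient, Nat.totient_prime (Fact.out : p.Prime)]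
  by_cases hT : orderOf u ∣ (p-1)/d
  · rw [if_pos hT]
    have hex : ∃ v : (ZMod p)ˣ, v ^ d = u := (lemRoot u d (hcardU ▸ hd)).mpr
      (by rw [hcardU]; exact hT)
    have htriv := (triv_iff p u d).mpr hex
    rw [Finset.sum_congr rfl (fun χ hχ => htriv χ (Finset.mem_filter.mp hχ).2)]
    rw [Finset.sum_const, lemCard d (hcard ▸ hd), nsmul_eq_mul, mul_one]
  · rw [if_neg hT]
    have hnot : ¬ (∀ χ : DirichletCharacter ℂ p, χ ^ d = 1 → χ (u : ZMod p) = 1) := by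
      rw [triv_iff p u d, lemRoot u d (hcardU ▸ hd), hcardU]
      exact hT
    push_neg at hnot
    obtain ⟨ξ, hξd, hξu⟩ := hnot
    set S := ∑ χ ∈ univ.filter (fun χ : DirichletCharacter ℂ p => χ ^ d = 1), χ (u : ZMod p)
      with hS
    have key : ξ (u : ZMod p) * S = S := by
      rw [hS, Finset.mul_sum]
      refine Finset.sum_nbij' (fun χ => ξ * χ) (fun χ => ξ⁻¹ * χ) ?_ ?_ ?_ ?_ ?_
      · intro χ hχ
        simp only [Finset.mem_filter, Finset.mem_univ, true_and] at hχ ⊢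
        rw [mul_pow, hχ, hξd, mul_one]
      · intro χ hχ
        simp only [Finset.mem_filter, Finset.mem_univ, true_and] at hχ ⊢
        rw [mul_pow, hχ, inv_pow, hξd, inv_one, mul_one]
      · intro χ _; show ξ⁻¹ * (ξ * χ) = χ; rw [← mul_assoc, inv_mul_cancel, one_mul]
      · intro χ _; show ξ * (ξ⁻¹ * χ) = χ; rw [← mul_assoc, mul_inv_cancel, one_mul]
      · intro χ _
        show ξ ↑u * χ ↑u = (ξ * χ) ↑u
        rw [MulChar.mul_apply]
    have : (ξ (u : ZMod p) - 1) * S = 0 := by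
      rw [sub_mul, one_mul, key, sub_self]
    rcases mul_eq_zero.mp this with h | h
    · exact absurd (by linear_combination h : ξ (u : ZMod p) = 1) hξu
    · exact h

end sums


open ArithmeticFunction in
theorem stmt_14 (p : ℕ) [Fact p.Prime] (g : ℤ) (hpg : ¬ (p : ℤ) ∣ g) :
    (if orderOf ((g : ZMod p)) = p - 1 then (1 : ℂ) else 0)
      = ((Nat.totient (p - 1) : ℂ) / ((p : ℂ) - 1)) *
          ∑ k ∈ (p - 1).divisors,
            ((moebius k : ℂ) / (Nat.totient k : ℂ)) *
              ∑ χ ∈ Finset.univ.filter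
                  (fun χ : DirichletCharacter ℂ p => orderOf χ = k),
                χ ((g : ZMod p)) := by
  classical
  have hp : p.Prime := Fact.out
  have hn0 : p - 1 ≠ 0 := by have := hp.two_le; omega
  have ha : IsUnit ((g : ZMod p)) := by
    rw [isUnit_iff_ne_zero]
    intro h0
    exact hpg ((ZMod.intCast_zmod_eq_zero_iff_dvd g p).mp h0)
  set u := ha.unit with hu'
  have hu : (u : ZMod p) = (g : ZMod p) := ha.unit_spec
  have hordu : orderOf ((g : ZMod p)) = orderOf u := by rw [← hu, orderOf_units]
  have hcardU : Fintype.card (ZMod p)ˣ = p - 1 := by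
    rw [ZMod.card_units_eq_totient, Nat.totient_prime hp]
  have hm : orderOf u ∣ p - 1 := hcardU ▸ orderOf_dvd_card
  have hm0 : orderOf u ≠ 0 := (orderOf_pos u).ne'
  have hpc : ((p - 1 : ℕ) : ℂ) = (p : ℂ) - 1 := by
    push_cast [Nat.cast_sub hp.one_le]
    ring
  rw [← hpc]
  set T : ℕ → ℂ := fun k => ∑ χ ∈ Finset.univ.filter
      (fun χ : DirichletCharacter ℂ p => orderOf χ = k), χ ((g : ZMod p)) with hT
  set A := (p - 1).divisors with hA
  -- Step E1/E2: distribute and apply lemA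
  have E12 : ((Nat.totient (p-1) : ℂ) / ((p-1 : ℕ) : ℂ)) *
        ∑ k ∈ A, ((moebius k : ℂ) / (Nat.totient k : ℂ)) * T k
      = ∑ k ∈ A, (∑ d ∈ A.filter (fun d => k ∣ d), (moebius d : ℂ)/d) * T k := by
    rw [Finset.mul_sum]
    refine Finset.sum_congr rfl fun k hk => ?_
    rw [← mul_assoc, lemA (p-1) k hn0 (Nat.mem_divisors.mp hk).1]
  -- Step E3/E4/E5: swap sums
  have E345 : ∑ k ∈ A, (∑ d ∈ A.filter (fun d => k ∣ d), (moebius d : ℂ)/d) * T k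
      = ∑ d ∈ A, ((moebius d : ℂ)/d) * ∑ k ∈ d.divisors, T k := by
    have e3 : ∀ k ∈ A, (∑ d ∈ A.filter (fun d => k ∣ d), (moebius d : ℂ)/d) * T k
        = ∑ d ∈ A, (if k ∣ d then ((moebius d : ℂ)/d) * T k else 0) := by
      intro k _
      rw [Finset.sum_mul, Finset.sum_filter]
    rw [Finset.sum_congr rfl e3, Finset.sum_comm]
    refine Finset.sum_congr rfl fun d hd => ?_
    rw [← Finset.sum_filter, Nat.divisors_filter_dvd_of_dvd hn0 (Nat.mem_divisors.mp hd).1,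
      ← Finset.mul_sum]
  -- Step E6: inner sums via fiberwise decomposition and character sum
  have E6 : ∀ d ∈ A, ∑ k ∈ d.divisors, T k
      = if orderOf u ∣ (p-1)/d then (d:ℂ) else 0 := by
    intro d hd
    obtain ⟨hdn, -⟩ := Nat.mem_divisors.mp hd
    have hd0 : d ≠ 0 := fun h => hn0 (by simpa [h] using hdn)
    have maps : ∀ χ ∈ Finset.univ.filter
        (fun χ : DirichletCharacter ℂ p => χ ^ d = 1), orderOf χ ∈ d.divisors := by
      intro χ hχ
      simp only [Finset.mem_filter, Finset.mem_univ, true_and] at hχ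
      exact Nat.mem_divisors.mpr ⟨orderOf_dvd_iff_pow_eq_one.mpr hχ, hd0⟩
    have hfib := Finset.sum_fiberwise_of_maps_to maps
      (fun χ : DirichletCharacter ℂ p => χ ((g : ZMod p)))
    have hinner : ∀ k ∈ d.divisors, T k = ∑ χ ∈ (Finset.univ.filter
        (fun χ : DirichletCharacter ℂ p => χ ^ d = 1)).filter
        (fun χ => orderOf χ = k), χ ((g : ZMod p)) := by
      intro k hk
      obtain ⟨hkd, -⟩ := Nat.mem_divisors.mp hk
      simp only [hT]
      congr 1
      ext χ
      simp only [Finset.mem_filter, Finset.mem_univ, true_and]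
      exact ⟨fun h => ⟨orderOf_dvd_iff_pow_eq_one.mp (h ▸ hkd), h⟩, fun h => h.2⟩
    rw [Finset.sum_congr rfl hinner, hfib, ← hu, sum_pow_filter p u d hdn]
  rw [E12, E345, Finset.sum_congr rfl (fun d hd => by rw [E6 d hd])]
  -- Step E7: simplify terms
  set r := (p - 1) / orderOf u with hr
  have hrdvd : r ∣ p - 1 := Nat.div_dvd_of_dvd hm
  have E7 : ∀ d ∈ A, ((moebius d : ℂ)/d) * (if orderOf u ∣ (p-1)/d then (d:ℂ) else 0)
      = if d ∣ r then (moebius d : ℂ) else 0 := by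
    intro d hd
    obtain ⟨hdn, -⟩ := Nat.mem_divisors.mp hd
    have hd0 : d ≠ 0 := fun h => hn0 (by simpa [h] using hdn)
    have hcond : (orderOf u ∣ (p-1)/d) ↔ (d ∣ r) := by
      rw [Nat.dvd_div_iff_mul_dvd hdn, hr, Nat.dvd_div_iff_mul_dvd hm, mul_comm]
    rw [if_congr hcond rfl rfl]
    split_ifs with h
    · rw [div_mul_cancel₀]
      exact Nat.cast_ne_zero.mpr hd0
    · rw [mul_zero]
  rw [Finset.sum_congr rfl E7, ← Finset.sum_filter, hA,
    Nat.divisors_filter_dvd_of_dvd hn0 hrdvd]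
  -- Step E9: Möbius sum
  have E9 : ∑ d ∈ r.divisors, (moebius d : ℂ) = if r = 1 then 1 else 0 := by
    have hz : ∑ d ∈ r.divisors, moebius d = if r = 1 then 1 else 0 := by
      calc ∑ d ∈ r.divisors, moebius d
          = (moebius * (zeta : ArithmeticFunction ℤ)) r := (coe_mul_zeta_apply).symm
        _ = (1 : ArithmeticFunction ℤ) r := by rw [moebius_mul_coe_zeta]
        _ = if r = 1 then 1 else 0 := one_apply
    have := congrArg ((Int.cast : ℤ → ℂ)) hz
    push_cast at this
    exact this
  rw [E9]
  -- Final: conditions match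
  have hcond : (orderOf ((g : ZMod p)) = p - 1) ↔ r = 1 := by
    rw [hordu, hr]
    constructor
    · intro h
      rw [h]
      exact Nat.div_self (Nat.pos_of_ne_zero hn0)
    · intro h
      have := Nat.mul_div_cancel' hm
      rw [h, mul_one] at this
      exact this
  rw [if_congr hcond rfl rfl]
end

section
/- Let p be an odd prime, g an integer with p ∤ g, and k an odd positive integer dividing p-1 with 2k | p-1. Define φ̃_g(k,p) := φ(gcd(k, I))·μ(gcd(k, I)) where I = [(ℤ/pℤ)^× : ⟨g⟩] is the index of the subgroup generated by g. Then φ̃_g(2k, p) = -(g/p)·φ̃_g(k,p), where (g/p) is the Legendre symbol. -/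
set_option maxHeartbeats 1000000 in
open ArithmeticFunction in
theorem stmt_15 (p : ℕ) [Fact p.Prime] (hpodd : p ≠ 2)
    (g : ℤ) (hpg : ¬ (p : ℤ) ∣ g) (k : ℕ) (hk : Odd k) (h2k : 2 * k ∣ p - 1) :
    (Nat.totient (Nat.gcd (2 * k) ((p - 1) / orderOf ((g : ZMod p)))) : ℤ) *
        moebius (Nat.gcd (2 * k) ((p - 1) / orderOf ((g : ZMod p))))
      = - legendreSym p g *
          ((Nat.totient (Nat.gcd k ((p - 1) / orderOf ((g : ZMod p)))) : ℤ) *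
            moebius (Nat.gcd k ((p - 1) / orderOf ((g : ZMod p))))) := by
  have hp := (Fact.out : p.Prime)
  have hg0 : (g : ZMod p) ≠ 0 := by
    rwa [Ne, ZMod.intCast_zmod_eq_zero_iff_dvd]
  set o := orderOf ((g : ZMod p)) with ho_def
  have ho : o ∣ p - 1 := ZMod.orderOf_dvd_card_sub_one hg0
  set I := (p - 1) / o with hI_def
  have h2p : 2 ∣ p - 1 := dvd_trans ⟨k, rfl⟩ h2k
  have hIeven : Even I ↔ legendreSym p g = 1 := by
    rw [legendreSym.eq_one_iff p hg0, ZMod.euler_criterion p hg0,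
      ← orderOf_dvd_iff_pow_eq_one, even_iff_two_dvd,
      Nat.dvd_div_iff_mul_dvd ho, ← ho_def,
      show p / 2 = (p - 1) / 2 by omega,
      Nat.dvd_div_iff_mul_dvd h2p, mul_comm]
  by_cases hcase : Even I
  · -- I even, legendre = 1
    have hL : legendreSym p g = 1 := hIeven.mp hcase
    obtain ⟨J, hJ⟩ := hcase
    have hJ2 : I = 2 * J := by omega
    have hck : Nat.Coprime k 2 := hk.coprime_two_right
    have hgcd : Nat.gcd (2 * k) I = 2 * Nat.gcd k I := by
      rw [hJ2, Nat.gcd_mul_left, Nat.Coprime.gcd_mul_left_cancel_right J (Nat.coprime_two_left.mpr hk)]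
    have hdodd : Odd (Nat.gcd k I) := hk.of_dvd_nat (Nat.gcd_dvd_left k I)
    have hc2d : Nat.Coprime 2 (Nat.gcd k I) :=
      Nat.coprime_two_left.mpr hdodd
    rw [hgcd, hL, Nat.totient_mul hc2d, Nat.totient_two,
      isMultiplicative_moebius.map_mul_of_coprime hc2d,
      moebius_apply_prime Nat.prime_two]
    push_cast
    ring
  · -- I odd, legendre = -1
    have hL : legendreSym p g = -1 := by
      rcases legendreSym.eq_one_or_neg_one p hg0 with h | h
      · exact absurd (hIeven.mpr h) hcase
      · exact h
    have hcI : Nat.Coprime 2 I := Nat.coprime_two_left.mpr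
      (Nat.odd_iff.mpr (by rw [Nat.even_iff] at hcase; omega))
    have hgcd : Nat.gcd (2 * k) I = Nat.gcd k I :=
      Nat.Coprime.gcd_mul_left_cancel k hcI
    rw [hgcd, hL]
    ring
end

section
/- For odd squarefree g̃ coprime to even d, and ε₁, ε₂ ∈ {±1}: Σ_{a ∈ Φ_{ε₁,ε₂}(g̃,d)} ∏_{p | gcd(a-1, g̃)} (1 - 1/p) · ∏_{p | gcd(a+d-1, g̃)} (1 - 1/p) = (1/4)·[∏_{q|g̃} c(q) + ε₁·∏_{q|g̃} c₁(q) + ε₂·∏_{q|g̃} c₂(q) + ε₁ε₂·∏_{q|g̃} c₁₂(q)], where for each prime q | g̃: c(q) = q - 2 - 2/q if q ∤ d±1 and q - 2 - 1/q if q | d±1; c₁(q) = -((-d)/q) - (1/q)(1 + ((1-d)/q)) if q ∤ d+1, and -1 - (1/q)((1-d)/q) if q | d+1; c₂(q) symmetric with d ↔ -d reversed; c₁₂(q) = -1 - (1/q)(((1+d)/q) + ((1-d)/q)). -/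
/-- Local factor `c(q)`. -/
noncomputable def cFac (d q : ℕ) : ℚ :=
  if q ∣ d - 1 ∨ q ∣ d + 1 then (q : ℚ) - 2 - 1 / q else (q : ℚ) - 2 - 2 / q

/-- Local factor `c₁(q)`. -/
noncomputable def c1Fac (d q : ℕ) : ℚ :=
  if q ∣ d + 1 then -1 - (1 / q) * (jacobiSym (1 - (d : ℤ)) q : ℚ)
  else -(jacobiSym (-(d : ℤ)) q : ℚ) - (1 / q) * (1 + (jacobiSym (1 - (d : ℤ)) q : ℚ))

/-- Local factor `c₂(q)`. -/
noncomputable def c2Fac (d q : ℕ) : ℚ :=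
  if q ∣ d - 1 then -1 - (1 / q) * (jacobiSym (1 + (d : ℤ)) q : ℚ)
  else -(jacobiSym (d : ℤ) q : ℚ) - (1 / q) * (1 + (jacobiSym (1 + (d : ℤ)) q : ℚ))

/-- Local factor `c₁₂(q)`. -/
noncomputable def c12Fac (d q : ℕ) : ℚ :=
  -1 - (1 / q) * ((jacobiSym (1 + (d : ℤ)) q : ℚ) + (jacobiSym (1 - (d : ℤ)) q : ℚ))

open Finset

noncomputable def wFn (n : ℕ) (x : ℤ) : ℚ := ∏ p ∈ (Int.gcd x n).primeFactors, (1 - 1/(p:ℚ))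

lemma gcd_congr_of_dvd_sub {n : ℕ} {x y : ℤ} (h : (n:ℤ) ∣ x - y) : Int.gcd x n = Int.gcd y n := by
  have key : ∀ a b : ℤ, (n:ℤ) ∣ a - b → Int.gcd a n ∣ Int.gcd b n := by
    intro a b hab
    rw [← Int.natCast_dvd_natCast]
    apply Int.dvd_coe_gcd
    · have h1 : (Int.gcd a n : ℤ) ∣ a := Int.gcd_dvd_left _ _
      have h2 : (Int.gcd a n : ℤ) ∣ a - b := dvd_trans (Int.gcd_dvd_right _ _) hab
      simpa using dvd_sub h1 h2
    · exact Int.gcd_dvd_right _ _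
  exact Nat.dvd_antisymm (key x y h) (key y x (by rw [← neg_sub]; exact dvd_neg.mpr h))

lemma wFn_congr {n : ℕ} {x y : ℤ} (h : (n:ℤ) ∣ x - y) : wFn n x = wFn n y := by
  unfold wFn; rw [gcd_congr_of_dvd_sub h]

lemma Nat.gcd_mul_of_coprime {m n : ℕ} (h : Nat.Coprime m n) (k : ℕ) :
    Nat.gcd k (m * n) = Nat.gcd k m * Nat.gcd k n := by
  apply Nat.dvd_antisymm
  · have hg : Nat.gcd k (m*n) ∣ m * n := Nat.gcd_dvd_right _ _
    have := (Nat.gcd_mul_gcd_eq_iff_dvd_mul_of_coprime (x := Nat.gcd k (m*n)) h).mpr hg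
    have hk : Nat.gcd k (m*n) ∣ k := Nat.gcd_dvd_left _ _
    rw [← this]
    exact Nat.mul_dvd_mul
      (Nat.dvd_gcd ((Nat.gcd_dvd_left _ _).trans hk) (Nat.gcd_dvd_right _ _))
      (Nat.dvd_gcd ((Nat.gcd_dvd_left _ _).trans hk) (Nat.gcd_dvd_right _ _))
  · apply Nat.Coprime.mul_dvd_of_dvd_of_dvd
    · exact Nat.Coprime.coprime_dvd_left (Nat.gcd_dvd_right k m) (Nat.Coprime.coprime_dvd_right (Nat.gcd_dvd_right k n) h)
    · exact Nat.dvd_gcd (Nat.gcd_dvd_left _ _) ((Nat.gcd_dvd_right _ _).trans (Dvd.intro n rfl))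
    · exact Nat.dvd_gcd (Nat.gcd_dvd_left _ _) ((Nat.gcd_dvd_right _ _).trans (Dvd.intro_left m rfl))

lemma wFn_mul {m n : ℕ} (h : Nat.Coprime m n) (hm : m ≠ 0) (hn : n ≠ 0) (x : ℤ) :
    wFn (m * n) x = wFn m x * wFn n x := by
  unfold wFn
  have hg : Int.gcd x ((m * n : ℕ) : ℤ) = Int.gcd x m * Int.gcd x n := by
    simp only [Int.gcd, Int.natAbs_natCast]
    exact Nat.gcd_mul_of_coprime h _
  rw [hg, Nat.primeFactors_mul, Finset.prod_union]
  · exact Nat.Coprime.disjoint_primeFactors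
      (Nat.Coprime.coprime_dvd_left (Nat.gcd_dvd_right _ _)
        (Nat.Coprime.coprime_dvd_right (Nat.gcd_dvd_right _ _) h))
  · simp only [ne_eq, Int.gcd_eq_zero_iff]
    rintro ⟨-, h2⟩; exact hm (by exact_mod_cast h2)
  · simp only [ne_eq, Int.gcd_eq_zero_iff]
    rintro ⟨-, h2⟩; exact hn (by exact_mod_cast h2)

noncomputable def Ffn (d e₁ e₂ n : ℕ) (x : ℤ) : ℚ :=
  wFn n (x - 1) * wFn n (x + d - 1) * (jacobiSym x n : ℚ)^e₁ * (jacobiSym (x + d) n : ℚ)^e₂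

lemma jacobi_congr {n : ℕ} {x y : ℤ} (h : (n:ℤ) ∣ x - y) : jacobiSym x n = jacobiSym y n := by
  have h' : x ≡ y [ZMOD (n:ℤ)] := Int.modEq_iff_dvd.mpr (by rw [show y - x = -(x - y) by ring]; exact dvd_neg.mpr h)
  exact jacobiSym.mod_left' h'

lemma Ffn_congr {d e₁ e₂ n : ℕ} {x y : ℤ} (h : (n:ℤ) ∣ x - y) :
    Ffn d e₁ e₂ n x = Ffn d e₁ e₂ n y := by
  unfold Ffn
  rw [wFn_congr (show (n:ℤ) ∣ (x-1)-(y-1) by simpa using h),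
      wFn_congr (show (n:ℤ) ∣ (x+d-1)-(y+d-1) by ring_nf; simpa [sub_add_eq_sub_sub] using h),
      jacobi_congr h, jacobi_congr (show (n:ℤ) ∣ (x+d)-(y+d) by simpa using h)]

lemma Ffn_mul {d e₁ e₂ : ℕ} {m n : ℕ} (h : Nat.Coprime m n) (hm : m ≠ 0) (hn : n ≠ 0) (x : ℤ) :
    Ffn d e₁ e₂ (m * n) x = Ffn d e₁ e₂ m x * Ffn d e₁ e₂ n x := by
  unfold Ffn
  rw [wFn_mul h hm hn, wFn_mul h hm hn, jacobiSym.mul_right' _ hm hn, jacobiSym.mul_right' _ hm hn]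
  push_cast
  ring

noncomputable def Tfn (d e₁ e₂ n : ℕ) : ℚ := ∑ a ∈ Finset.range n, Ffn d e₁ e₂ n a

lemma sum_range_eq_sum_zmod (n : ℕ) [NeZero n] (f : ℤ → ℚ) :
    ∑ a ∈ Finset.range n, f a = ∑ y : ZMod n, f y.val := by
  refine Finset.sum_bij' (fun (a : ℕ) (_ : a ∈ Finset.range n) => (a : ZMod n))
    (fun (y : ZMod n) (_ : y ∈ Finset.univ) => y.val) ?_ ?_ ?_ ?_ ?_
  · intro a ha; exact Finset.mem_univ _
  · intro y _; exact Finset.mem_range.mpr (ZMod.val_lt y)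
  · intro a ha; exact ZMod.val_cast_of_lt (Finset.mem_range.mp ha)
  · intro y _; simp [ZMod.natCast_val, ZMod.cast_id]
  · intro a ha
    rw [ZMod.val_cast_of_lt (Finset.mem_range.mp ha)]

lemma dvd_cast_sub_of_zmod_eq {m a b : ℕ} (h : (a : ZMod m) = (b : ZMod m)) :
    (m:ℤ) ∣ (a:ℤ) - (b:ℤ) := by
  rw [← ZMod.intCast_zmod_eq_zero_iff_dvd]
  push_cast
  rw [h]; ring

lemma Tfn_mul (d e₁ e₂ : ℕ) {m n : ℕ} (h : Nat.Coprime m n) (hm : m ≠ 0) (hn : n ≠ 0) :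
    Tfn d e₁ e₂ (m * n) = Tfn d e₁ e₂ m * Tfn d e₁ e₂ n := by
  have im : NeZero m := ⟨hm⟩
  have im2 : NeZero n := ⟨hn⟩
  have im3 : NeZero (m * n) := ⟨mul_ne_zero hm hn⟩
  unfold Tfn
  rw [sum_range_eq_sum_zmod (m*n), sum_range_eq_sum_zmod m, sum_range_eq_sum_zmod n,
    Finset.sum_mul_sum,
    show (∑ i : ZMod m, ∑ j : ZMod n, Ffn d e₁ e₂ m (i.val) * Ffn d e₁ e₂ n (j.val))
      = ∑ p : ZMod m × ZMod n, Ffn d e₁ e₂ m (p.1.val) * Ffn d e₁ e₂ n (p.2.val) from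
      (Fintype.sum_prod_type (fun p : ZMod m × ZMod n => Ffn d e₁ e₂ m (p.1.val) * Ffn d e₁ e₂ n (p.2.val))).symm]
  apply Fintype.sum_equiv (ZMod.chineseRemainder h).toEquiv
  intro x
  set e := ZMod.chineseRemainder h with he
  have hx : x = ((x.val : ℕ) : ZMod (m*n)) := by simp [ZMod.natCast_val, ZMod.cast_id]
  have hy : (e x).1 = ((x.val : ℕ) : ZMod m) := by
    conv_lhs => rw [hx]
    rw [map_natCast]
    simp
  have hz : (e x).2 = ((x.val : ℕ) : ZMod n) := by
    conv_lhs => rw [hx]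
    rw [map_natCast]
    simp
  have hy' : (((e x).1.val : ℕ) : ZMod m) = ((x.val : ℕ) : ZMod m) := by
    rw [← hy]; simp [ZMod.natCast_val, ZMod.cast_id]
  have hz' : (((e x).2.val : ℕ) : ZMod n) = ((x.val : ℕ) : ZMod n) := by
    rw [← hz]; simp [ZMod.natCast_val, ZMod.cast_id]
  rw [Ffn_mul h hm hn]
  rw [Ffn_congr (dvd_cast_sub_of_zmod_eq hy'.symm), Ffn_congr (dvd_cast_sub_of_zmod_eq hz'.symm)]
  rfl

section PrimeSums
variable {q : ℕ} [hq : Fact q.Prime]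

local notation "χ" => quadraticChar (ZMod q)

lemma sum_quadChar_shift (c : ZMod q) (hq2 : q ≠ 2) : ∑ y : ZMod q, χ (y + c) = 0 := by
  have h := Fintype.sum_equiv (Equiv.addRight c) (fun y => χ (y + c)) (fun z => χ z)
    (fun y => rfl)
  rw [h]
  exact quadraticChar_sum_zero (by rw [ZMod.ringChar_zmod_n]; exact hq2)

lemma sum_quadChar_mul (hq2 : q ≠ 2) {δ : ZMod q} (hδ : δ ≠ 0) :
    ∑ y : ZMod q, χ y * χ (y + δ) = -1 := by
  classical
  have hchar : ringChar (ZMod q) ≠ 2 := by rw [ZMod.ringChar_zmod_n]; exact hq2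
  have hstep : ∀ y : ZMod q, y ≠ 0 → χ y * χ (y + δ) = χ (1 + δ * y⁻¹) := by
    intro y hy
    have h1 : y + δ = y * (1 + δ * y⁻¹) := by field_simp
    rw [h1, map_mul, ← mul_assoc, ← sq, quadraticChar_sq_one hy, one_mul]
  have h0 : ∑ y : ZMod q, χ y * χ (y + δ)
      = ∑ y ∈ Finset.univ.erase 0, χ y * χ (y + δ) :=
    (Finset.sum_erase _ (by simp)).symm
  rw [h0, Finset.sum_congr rfl (fun y hy => hstep y (Finset.ne_of_mem_erase hy))]
  have hbij : ∑ y ∈ Finset.univ.erase (0 : ZMod q), χ (1 + δ * y⁻¹)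
      = ∑ z ∈ Finset.univ.erase (1 : ZMod q), χ z := by
    refine Finset.sum_bij' (fun (y : ZMod q) (_ : y ∈ Finset.univ.erase 0) => 1 + δ * y⁻¹)
      (fun (z : ZMod q) (_ : z ∈ Finset.univ.erase 1) => δ * (z - 1)⁻¹) ?_ ?_ ?_ ?_ ?_
    · intro y hy
      have hy0 : y ≠ 0 := Finset.ne_of_mem_erase hy
      refine Finset.mem_erase.mpr ⟨?_, Finset.mem_univ _⟩
      intro hcon
      have : δ * y⁻¹ = 0 := by linear_combination hcon
      rcases mul_eq_zero.mp this with h | h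
      · exact hδ h
      · exact hy0 (inv_eq_zero.mp h)
    · intro z hz
      have hz1 : z ≠ 1 := Finset.ne_of_mem_erase hz
      refine Finset.mem_erase.mpr ⟨?_, Finset.mem_univ _⟩
      intro hcon
      rcases mul_eq_zero.mp hcon with h | h
      · exact hδ h
      · exact hz1 (by have := inv_eq_zero.mp h; linear_combination this)
    · intro y hy
      have hy0 : y ≠ 0 := Finset.ne_of_mem_erase hy
      field_simp
      rw [add_sub_cancel_left, div_self hδ]
    · intro z hz
      have hz1 : z ≠ 1 := Finset.ne_of_mem_erase hz
      have : z - 1 ≠ 0 := sub_ne_zero.mpr hz1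
      field_simp
      ring
    · intro y hy; rfl
  rw [hbij, Finset.sum_erase_eq_sub (Finset.mem_univ _),
    quadraticChar_sum_zero hchar, map_one]
  ring

lemma sum_quadChar_one_sq (hq2 : q ≠ 2) {δ : ZMod q} (hδ : δ ≠ 0) :
    ∑ y : ZMod q, χ y * (χ (y + δ))^2 = -(χ (-δ)) := by
  classical
  have : ∀ y : ZMod q, χ y * (χ (y + δ))^2 = χ y - (if y = -δ then χ (-δ) else 0) := by
    intro y
    by_cases h : y = -δ
    · subst h; simp
    · have : y + δ ≠ 0 := fun hc => h (by linear_combination hc)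
      rw [quadraticChar_sq_one this, if_neg h]; ring
  rw [Finset.sum_congr rfl (fun y _ => this y), Finset.sum_sub_distrib,
    quadraticChar_sum_zero (by rw [ZMod.ringChar_zmod_n]; exact hq2),
    Finset.sum_ite_eq' Finset.univ (-δ) (fun _ => χ (-δ))]
  simp

lemma sum_quadChar_sq_one (hq2 : q ≠ 2) {δ : ZMod q} (hδ : δ ≠ 0) :
    ∑ y : ZMod q, (χ y)^2 * χ (y + δ) = -(χ δ) := by
  classical
  have : ∀ y : ZMod q, (χ y)^2 * χ (y + δ) = χ (y + δ) - (if y = 0 then χ δ else 0) := by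
    intro y
    by_cases h : y = 0
    · subst h; simp
    · rw [quadraticChar_sq_one h, if_neg h]; ring
  rw [Finset.sum_congr rfl (fun y _ => this y), Finset.sum_sub_distrib,
    sum_quadChar_shift δ hq2,
    Finset.sum_ite_eq' Finset.univ (0 : ZMod q) (fun _ => χ δ)]
  simp

lemma sum_quadChar_sq_sq (hq2 : q ≠ 2) {δ : ZMod q} (hδ : δ ≠ 0) :
    ∑ y : ZMod q, (χ y)^2 * (χ (y + δ))^2 = q - 2 := by
  classical
  have key : ∀ y : ZMod q, (χ y)^2 * (χ (y + δ))^2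
      = 1 - (if y = 0 then 1 else 0) - (if y = -δ then 1 else 0) := by
    intro y
    by_cases h0 : y = 0
    · subst h0
      rw [if_pos rfl, if_neg (fun hc => hδ (by linear_combination hc))]
      simp
    · by_cases h1 : y = -δ
      · subst h1
        rw [if_neg h0, if_pos rfl]
        simp
      · have hy2 : y + δ ≠ 0 := fun hc => h1 (by linear_combination hc)
        rw [quadraticChar_sq_one h0, quadraticChar_sq_one hy2, if_neg h0, if_neg h1]
        ring
  rw [Finset.sum_congr rfl (fun y _ => key y)]
  rw [Finset.sum_sub_distrib, Finset.sum_sub_distrib,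
    Finset.sum_ite_eq' Finset.univ (0 : ZMod q) (fun _ => (1:ℤ)),
    Finset.sum_ite_eq' Finset.univ (-δ) (fun _ => (1:ℤ))]
  simp [ZMod.card]
  ring

end PrimeSums

section PrimeEval
variable {q : ℕ} [hq : Fact q.Prime]

local notation "χ" => quadraticChar (ZMod q)

lemma wFn_prime (x : ℤ) :
    wFn q x = if ((x : ZMod q) = 0) then 1 - 1/(q:ℚ) else 1 := by
  unfold wFn
  by_cases h : (x : ZMod q) = 0
  · rw [if_pos h]
    have hdvd : (q:ℤ) ∣ x := (ZMod.intCast_zmod_eq_zero_iff_dvd x q).mp h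
    have hg : Int.gcd x q = q := by
      have := Int.gcd_eq_right (Int.natCast_nonneg q) hdvd; exact_mod_cast this
    rw [hg, Nat.Prime.primeFactors hq.out, Finset.prod_singleton]
  · rw [if_neg h]
    have hdvd : ¬ (q:ℤ) ∣ x := fun hc => h ((ZMod.intCast_zmod_eq_zero_iff_dvd x q).mpr hc)
    have hg : Int.gcd x q ∣ q := by
      have := Nat.gcd_dvd_right x.natAbs q
      simpa [Int.gcd] using this
    rcases (Nat.Prime.eq_one_or_self_of_dvd hq.out _ hg) with h1 | h1
    · rw [h1]; simp
    · exfalso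
      apply hdvd
      have : q ∣ x.natAbs := h1 ▸ (by simpa [Int.gcd] using Nat.gcd_dvd_left x.natAbs q)
      exact Int.natAbs_dvd_natAbs.mp (by simpa using this)

lemma jacobi_prime (x : ℤ) : jacobiSym x q = χ ((x : ZMod q)) := by
  rw [← jacobiSym.legendreSym.to_jacobiSym]
  rfl

lemma Tfn_prime_eq (d e₁ e₂ : ℕ) (hqd : ¬ ((q:ℤ) ∣ (d:ℤ))) :
    Tfn d e₁ e₂ q =
      (∑ y : ZMod q, (χ y : ℚ)^e₁ * (χ (y + (d : ZMod q)) : ℚ)^e₂)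
      - (1/q) * ((χ 1 : ℚ)^e₁ * (χ (1 + (d : ZMod q)) : ℚ)^e₂)
      - (1/q) * ((χ (1 - (d : ZMod q)) : ℚ)^e₁ * (χ 1 : ℚ)^e₂) := by
  have hq0 : NeZero q := ⟨hq.out.ne_zero⟩
  have hδ : (d : ZMod q) ≠ 0 := fun hc => hqd ((ZMod.intCast_zmod_eq_zero_iff_dvd d q).mp (by exact_mod_cast hc))
  set δ := (d : ZMod q) with hδdef
  have hne : (1 : ZMod q) ≠ 1 - δ := fun hc => hδ (by linear_combination hc)
  have hF : ∀ y : ZMod q, Ffn d e₁ e₂ q (y.val)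
      = ((χ y : ℚ)^e₁ * (χ (y + δ) : ℚ)^e₂)
        - (1/q) * (if y = 1 then (χ y : ℚ)^e₁ * (χ (y + δ) : ℚ)^e₂ else 0)
        - (1/q) * (if y = 1 - δ then (χ y : ℚ)^e₁ * (χ (y + δ) : ℚ)^e₂ else 0) := by
    intro y
    have hy : ((y.val : ℕ) : ZMod q) = y := by
      simp [ZMod.natCast_val, ZMod.cast_id]
    unfold Ffn
    rw [wFn_prime ((y.val : ℤ) - 1), wFn_prime ((y.val : ℤ) + d - 1),
      jacobi_prime (y.val : ℤ), jacobi_prime ((y.val : ℤ) + d)]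
    have hy' : (((y.val : ℤ)) : ZMod q) = y := by push_cast; rw [hy]
    have hc1 : (((y.val : ℤ) - 1 : ℤ) : ZMod q) = y - 1 := by push_cast; rw [hy]
    have hc2 : (((y.val : ℤ) + d - 1 : ℤ) : ZMod q) = y + δ - 1 := by push_cast; rw [hy]
    have hc3 : (((y.val : ℤ) + d : ℤ) : ZMod q) = y + δ := by push_cast; rw [hy]
    rw [hc1, hc2, hc3, hy']
    have e1 : (y - 1 = 0) ↔ (y = 1) := sub_eq_zero
    have e2 : (y + δ - 1 = 0) ↔ (y = 1 - δ) := by constructor <;> intro h <;> linear_combination h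
    simp only [e1, e2]
    by_cases hy1 : y = 1 <;> by_cases hy2 : y = 1 - δ
    · rw [hy1] at hy2; exact absurd hy2 hne
    · simp only [if_pos hy1, if_neg hy2]; ring
    · simp only [if_neg hy1, if_pos hy2]; ring
    · simp only [if_neg hy1, if_neg hy2]; ring
  unfold Tfn
  rw [sum_range_eq_sum_zmod q, Finset.sum_congr rfl (fun y _ => hF y)]
  rw [Finset.sum_sub_distrib, Finset.sum_sub_distrib, ← Finset.mul_sum, ← Finset.mul_sum,
    Finset.sum_ite_eq' Finset.univ (1 : ZMod q)
      (fun y => (χ y : ℚ)^e₁ * (χ (y + δ) : ℚ)^e₂),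
    Finset.sum_ite_eq' Finset.univ ((1 : ZMod q) - δ)
      (fun y => (χ y : ℚ)^e₁ * (χ (y + δ) : ℚ)^e₂)]
  rw [show (1 : ZMod q) - δ + δ = 1 by ring]
  simp only [Finset.mem_univ, if_pos]

end PrimeEval

section PrimeFinal
variable {q : ℕ} [hq : Fact q.Prime]

local notation "χ" => quadraticChar (ZMod q)

lemma main_sum_cast (e₁ e₂ : ℕ) (δ : ZMod q) :
    (∑ y : ZMod q, (χ y : ℚ)^e₁ * (χ (y + δ) : ℚ)^e₂)
      = ((∑ y : ZMod q, (χ y)^e₁ * (χ (y + δ))^e₂ : ℤ) : ℚ) := by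
  push_cast; rfl

variable (d : ℕ) (hq2 : q ≠ 2) (hd1 : 0 < d) (hqd : ¬ q ∣ d)

section
include hqd

lemma delta_ne_zero : (d : ZMod q) ≠ 0 := by
  rwa [Ne, ZMod.natCast_eq_zero_iff]

include hd1 in
lemma cond_one : q ∣ d - 1 ↔ (d : ZMod q) = 1 := by
  rw [← ZMod.natCast_eq_zero_iff, Nat.cast_sub hd1]
  push_cast
  exact sub_eq_zero

lemma cond_neg_one : q ∣ d + 1 ↔ (d : ZMod q) = -1 := by
  rw [← ZMod.natCast_eq_zero_iff]
  push_cast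
  constructor
  · intro h; linear_combination h
  · intro h; linear_combination h

end

include hq2 in
lemma one_ne_neg_one : (1 : ZMod q) ≠ -1 := by
  have h2 : Fact (2 < q) := ⟨lt_of_le_of_ne hq.out.two_le (Ne.symm hq2)⟩
  exact fun h => ZMod.neg_one_ne_one h.symm

lemma jac_cast₁ : (jacobiSym (1 - (d:ℤ)) q : ℚ) = ((χ (1 - (d : ZMod q)) : ℤ) : ℚ) := by
  rw [jacobi_prime]; push_cast; norm_num

lemma jac_cast₂ : (jacobiSym (1 + (d:ℤ)) q : ℚ) = ((χ (1 + (d : ZMod q)) : ℤ) : ℚ) := by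
  rw [jacobi_prime]; push_cast; norm_num

lemma jac_cast₃ : (jacobiSym (-(d:ℤ)) q : ℚ) = ((χ (-(d : ZMod q)) : ℤ) : ℚ) := by
  rw [jacobi_prime]; push_cast; norm_num

lemma jac_cast₄ : (jacobiSym ((d:ℤ)) q : ℚ) = ((χ ((d : ZMod q)) : ℤ) : ℚ) := by
  rw [jacobi_prime]; push_cast; norm_num

end PrimeFinal

section PrimeFour
variable {q : ℕ} [hq : Fact q.Prime]

local notation "χ" => quadraticChar (ZMod q)

lemma hqd_int {d : ℕ} (hqd : ¬ q ∣ d) : ¬ ((q:ℤ) ∣ (d:ℤ)) :=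
  fun h => hqd (Int.ofNat_dvd.mp h)

lemma one_sub_ne {δ : ZMod q} (h : δ ≠ 1) : (1:ZMod q) - δ ≠ 0 :=
  fun hc => h (by linear_combination -hc)

lemma one_add_ne {δ : ZMod q} (h : δ ≠ -1) : (1:ZMod q) + δ ≠ 0 :=
  fun hc => h (by linear_combination hc)

lemma sq_cast_one {z : ZMod q} (h : z ≠ 0) : ((χ z : ℤ) : ℚ)^2 = 1 := by
  rw [← Int.cast_pow, quadraticChar_sq_one h]; norm_num

lemma Tfn_prime_22 {d : ℕ} (hq2 : q ≠ 2) (hd1 : 0 < d) (hqd : ¬ q ∣ d) :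
    Tfn d 2 2 q = cFac d q := by
  have hδ : (d : ZMod q) ≠ 0 := delta_ne_zero d hqd
  rw [Tfn_prime_eq d 2 2 (hqd_int hqd), main_sum_cast, sum_quadChar_sq_sq hq2 hδ]
  unfold cFac
  set δ := (d : ZMod q) with hδd
  have h11 : ((χ (1 : ZMod q) : ℤ) : ℚ) = 1 := by rw [map_one]; norm_num
  by_cases h1 : δ = 1
  · have hn1 : δ ≠ -1 := fun hc => one_ne_neg_one hq2 (h1 ▸ hc)
    rw [if_pos (Or.inl ((cond_one d hd1 hqd).mpr h1))]
    rw [sq_cast_one (one_add_ne hn1), h11]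
    rw [show (1:ZMod q) - δ = 0 by rw [h1]; ring]
    push_cast
    simp
  · by_cases h2 : δ = -1
    · rw [if_pos (Or.inr ((cond_neg_one d hqd).mpr h2))]
      rw [sq_cast_one (one_sub_ne h1), h11]
      rw [show (1:ZMod q) + δ = 0 by rw [h2]; ring]
      push_cast
      simp
    · rw [if_neg (by
        rintro (h | h)
        · exact h1 ((cond_one d hd1 hqd).mp h)
        · exact h2 ((cond_neg_one d hqd).mp h))]
      rw [sq_cast_one (one_add_ne h2), sq_cast_one (one_sub_ne h1), h11]
      push_cast
      ring

lemma Tfn_prime_12 {d : ℕ} (hq2 : q ≠ 2) (hd1 : 0 < d) (hqd : ¬ q ∣ d) :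
    Tfn d 1 2 q = c1Fac d q := by
  have hδ : (d : ZMod q) ≠ 0 := delta_ne_zero d hqd
  rw [Tfn_prime_eq d 1 2 (hqd_int hqd), main_sum_cast]
  simp only [pow_one]
  rw [sum_quadChar_one_sq hq2 hδ]
  unfold c1Fac
  set δ := (d : ZMod q) with hδd
  have h11 : ((χ (1 : ZMod q) : ℤ) : ℚ) = 1 := by rw [map_one]; norm_num
  rw [jac_cast₁, jac_cast₃]
  by_cases h2 : δ = -1
  · rw [if_pos ((cond_neg_one d hqd).mpr h2)]
    rw [show (1:ZMod q) + δ = 0 by rw [h2]; ring]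
    rw [show -δ = (1 : ZMod q) by rw [h2]; ring]
    rw [map_one]
    push_cast
    simp
    exact Or.inl rfl
  · rw [if_neg (fun h => h2 ((cond_neg_one d hqd).mp h))]
    rw [sq_cast_one (one_add_ne h2), h11]
    push_cast
    ring

lemma Tfn_prime_21 {d : ℕ} (hq2 : q ≠ 2) (hd1 : 0 < d) (hqd : ¬ q ∣ d) :
    Tfn d 2 1 q = c2Fac d q := by
  have hδ : (d : ZMod q) ≠ 0 := delta_ne_zero d hqd
  rw [Tfn_prime_eq d 2 1 (hqd_int hqd), main_sum_cast]
  simp only [pow_one]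
  rw [sum_quadChar_sq_one hq2 hδ]
  unfold c2Fac
  set δ := (d : ZMod q) with hδd
  have h11 : ((χ (1 : ZMod q) : ℤ) : ℚ) = 1 := by rw [map_one]; norm_num
  rw [jac_cast₂, jac_cast₄]
  by_cases h1 : δ = 1
  · rw [if_pos ((cond_one d hd1 hqd).mpr h1)]
    rw [show (1:ZMod q) - δ = 0 by rw [h1]; ring, h1, map_one, quadraticChar_zero,
      show (1:ZMod q) + (d:ZMod q) = 1 + 1 by rw [← hδd, h1]]
    push_cast
    ring
  · rw [if_neg (fun h => h1 ((cond_one d hd1 hqd).mp h))]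
    rw [sq_cast_one (one_sub_ne h1), h11]
    push_cast
    ring

lemma Tfn_prime_11 {d : ℕ} (hq2 : q ≠ 2) (hd1 : 0 < d) (hqd : ¬ q ∣ d) :
    Tfn d 1 1 q = c12Fac d q := by
  have hδ : (d : ZMod q) ≠ 0 := delta_ne_zero d hqd
  rw [Tfn_prime_eq d 1 1 (hqd_int hqd), main_sum_cast]
  simp only [pow_one]
  rw [sum_quadChar_mul hq2 hδ]
  unfold c12Fac
  have h11 : ((χ (1 : ZMod q) : ℤ) : ℚ) = 1 := by rw [map_one]; norm_num
  rw [jac_cast₁, jac_cast₂, h11]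
  push_cast
  ring

end PrimeFour

lemma Tfn_one (d e₁ e₂ : ℕ) : Tfn d e₁ e₂ 1 = 1 := by
  unfold Tfn Ffn wFn
  simp [jacobiSym.one_right]

lemma Tfn_prod (d e₁ e₂ : ℕ) (s : Finset ℕ) (hp : ∀ p ∈ s, p.Prime) :
    Tfn d e₁ e₂ (∏ p ∈ s, p) = ∏ p ∈ s, Tfn d e₁ e₂ p := by
  classical
  induction s using Finset.induction with
  | empty => simpa using Tfn_one d e₁ e₂
  | @insert a s ha ih =>
    have hap : a.Prime := hp a (Finset.mem_insert_self a s)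
    have hps : ∀ p ∈ s, p.Prime := fun p hps => hp p (Finset.mem_insert_of_mem hps)
    have hcop : Nat.Coprime a (∏ p ∈ s, p) := by
      apply Nat.Coprime.prod_right
      intro p hpmem
      exact (Nat.coprime_primes hap (hps p hpmem)).mpr (fun h => ha (h ▸ hpmem))
    have hprodpos : (∏ p ∈ s, p) ≠ 0 :=
      Finset.prod_ne_zero_iff.mpr (fun p hpmem => (hps p hpmem).ne_zero)
    rw [Finset.prod_insert ha, Finset.prod_insert ha, Tfn_mul d e₁ e₂ hcop hap.ne_zero hprodpos,
      ih hps]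

lemma sum_Icc_eq_Tfn (d e₁ e₂ n : ℕ) (hn : 0 < n) :
    ∑ a ∈ Finset.Icc 1 n, Ffn d e₁ e₂ n a = Tfn d e₁ e₂ n := by
  have h1 : ∑ a ∈ Finset.Icc 1 n, Ffn d e₁ e₂ n a
      = (∑ a ∈ Finset.Ico 1 n, Ffn d e₁ e₂ n a) + Ffn d e₁ e₂ n n := by
    rw [← Finset.Ico_add_one_right_eq_Icc, Finset.sum_Ico_succ_top hn]
  have h2 : Tfn d e₁ e₂ n = Ffn d e₁ e₂ n 0 + ∑ a ∈ Finset.Ico 1 n, Ffn d e₁ e₂ n a := by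
    unfold Tfn
    rw [Finset.range_eq_Ico, Finset.sum_eq_sum_Ico_succ_bot hn]
    norm_num
  rw [h1, h2, Ffn_congr (show (n:ℤ) ∣ (n:ℤ) - 0 by simp)]
  ring

lemma pointwise_split (w₁ w₂ : ℚ) (j₁ j₂ ε₁ ε₂ : ℤ)
    (h1 : j₁ = 0 ∨ j₁ = 1 ∨ j₁ = -1) (h2 : j₂ = 0 ∨ j₂ = 1 ∨ j₂ = -1)
    (he₁ : ε₁ = 1 ∨ ε₁ = -1) (he₂ : ε₂ = 1 ∨ ε₂ = -1) :
    (if (j₁ = ε₁ ∧ j₂ = ε₂) then w₁ * w₂ else 0)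
    = (1/4) * ((w₁*w₂*(j₁:ℚ)^2*(j₂:ℚ)^2) + (ε₁:ℚ)*(w₁*w₂*(j₁:ℚ)^1*(j₂:ℚ)^2)
        + (ε₂:ℚ)*(w₁*w₂*(j₁:ℚ)^2*(j₂:ℚ)^1)
        + ((ε₁:ℚ)*(ε₂:ℚ))*(w₁*w₂*(j₁:ℚ)^1*(j₂:ℚ)^1)) := by
  rcases h1 with rfl|rfl|rfl <;> rcases h2 with rfl|rfl|rfl <;>
    rcases he₁ with rfl|rfl <;> rcases he₂ with rfl|rfl <;>
    norm_num <;> ring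

theorem stmt_17 (g d : ℕ) (hgodd : Odd g) (hgsf : Squarefree g)
    (hd : 0 < d) (hde : Even d) (hcop : Nat.Coprime g d)
    (ε₁ ε₂ : ℤ) (hε₁ : ε₁ = 1 ∨ ε₁ = -1) (hε₂ : ε₂ = 1 ∨ ε₂ = -1) :
    ∑ a ∈ (Finset.Icc 1 g).filter
        (fun a : ℕ => jacobiSym (a : ℤ) g = ε₁ ∧ jacobiSym ((a : ℤ) + d) g = ε₂),
      (∏ p ∈ (Nat.gcd (a - 1) g).primeFactors, (1 - 1 / (p : ℚ))) *
        (∏ p ∈ (Nat.gcd (a + d - 1) g).primeFactors, (1 - 1 / (p : ℚ)))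
      = (1 / 4) *
          ((∏ q ∈ g.primeFactors, cFac d q)
            + (ε₁ : ℚ) * ∏ q ∈ g.primeFactors, c1Fac d q
            + (ε₂ : ℚ) * ∏ q ∈ g.primeFactors, c2Fac d q
            + (ε₁ : ℚ) * (ε₂ : ℚ) * ∏ q ∈ g.primeFactors, c12Fac d q) := by
  classical
  have hg0 : 0 < g := Nat.pos_of_ne_zero hgsf.ne_zero
  -- facts about prime factors
  have hfacts : ∀ p ∈ g.primeFactors, p.Prime ∧ p ≠ 2 ∧ ¬ p ∣ d := by
    intro p hp
    have hp' : p.Prime := Nat.prime_of_mem_primeFactors hp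
    have hpg : p ∣ g := Nat.dvd_of_mem_primeFactors hp
    refine ⟨hp', ?_, ?_⟩
    · rintro rfl
      rcases hgodd with ⟨k, hk⟩
      omega
    · have hc : Nat.Coprime p d := Nat.Coprime.coprime_dvd_left hpg hcop
      exact (Nat.Prime.coprime_iff_not_dvd hp').mp hc
  -- T-products
  have hprod : ∀ e₁ e₂ : ℕ, Tfn d e₁ e₂ g = ∏ q ∈ g.primeFactors, Tfn d e₁ e₂ q := by
    intro e₁ e₂
    conv_lhs => rw [← Nat.prod_primeFactors_of_squarefree hgsf]
    exact Tfn_prod d e₁ e₂ _ (fun p hp => (hfacts p hp).1)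
  have h22 : Tfn d 2 2 g = ∏ q ∈ g.primeFactors, cFac d q := by
    rw [hprod]
    refine Finset.prod_congr rfl (fun p hp => ?_)
    have := Fact.mk (hfacts p hp).1
    exact Tfn_prime_22 (hfacts p hp).2.1 hd (hfacts p hp).2.2
  have h12 : Tfn d 1 2 g = ∏ q ∈ g.primeFactors, c1Fac d q := by
    rw [hprod]
    refine Finset.prod_congr rfl (fun p hp => ?_)
    have := Fact.mk (hfacts p hp).1
    exact Tfn_prime_12 (hfacts p hp).2.1 hd (hfacts p hp).2.2
  have h21 : Tfn d 2 1 g = ∏ q ∈ g.primeFactors, c2Fac d q := by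
    rw [hprod]
    refine Finset.prod_congr rfl (fun p hp => ?_)
    have := Fact.mk (hfacts p hp).1
    exact Tfn_prime_21 (hfacts p hp).2.1 hd (hfacts p hp).2.2
  have h11 : Tfn d 1 1 g = ∏ q ∈ g.primeFactors, c12Fac d q := by
    rw [hprod]
    refine Finset.prod_congr rfl (fun p hp => ?_)
    have := Fact.mk (hfacts p hp).1
    exact Tfn_prime_11 (hfacts p hp).2.1 hd (hfacts p hp).2.2
  rw [Finset.sum_filter]
  have key : ∀ a ∈ Finset.Icc 1 g,
      (if (jacobiSym (a : ℤ) g = ε₁ ∧ jacobiSym ((a : ℤ) + d) g = ε₂) then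
        (∏ p ∈ (Nat.gcd (a - 1) g).primeFactors, (1 - 1 / (p : ℚ))) *
        (∏ p ∈ (Nat.gcd (a + d - 1) g).primeFactors, (1 - 1 / (p : ℚ))) else 0)
      = (1/4) * (Ffn d 2 2 g a + (ε₁:ℚ) * Ffn d 1 2 g a + (ε₂:ℚ) * Ffn d 2 1 g a
          + ((ε₁:ℚ)*(ε₂:ℚ)) * Ffn d 1 1 g a) := by
    intro a ha
    have ha1 : 1 ≤ a := (Finset.mem_Icc.mp ha).1
    have hw1 : (∏ p ∈ (Nat.gcd (a - 1) g).primeFactors, (1 - 1 / (p : ℚ)))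
        = wFn g ((a:ℤ) - 1) := by
      unfold wFn
      congr 2
      rw [← Int.gcd_natCast_natCast]
      congr 1
      omega
    have hw2 : (∏ p ∈ (Nat.gcd (a + d - 1) g).primeFactors, (1 - 1 / (p : ℚ)))
        = wFn g ((a:ℤ) + d - 1) := by
      unfold wFn
      congr 2
      rw [← Int.gcd_natCast_natCast]
      congr 1
      omega
    rw [hw1, hw2]
    have := pointwise_split (wFn g ((a:ℤ) - 1)) (wFn g ((a:ℤ) + d - 1))
      (jacobiSym (a : ℤ) g) (jacobiSym ((a : ℤ) + d) g) ε₁ ε₂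
      (jacobiSym.trichotomy _ _) (jacobiSym.trichotomy _ _) hε₁ hε₂
    rw [this]
    unfold Ffn
    push_cast
    ring
  rw [Finset.sum_congr rfl key, ← Finset.mul_sum]
  congr 1
  rw [Finset.sum_add_distrib, Finset.sum_add_distrib, Finset.sum_add_distrib,
    ← Finset.mul_sum, ← Finset.mul_sum, ← Finset.mul_sum,
    sum_Icc_eq_Tfn d 2 2 g hg0, sum_Icc_eq_Tfn d 1 2 g hg0,
    sum_Icc_eq_Tfn d 2 1 g hg0, sum_Icc_eq_Tfn d 1 1 g hg0,
    h22, h12, h21, h11]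
end

section
/- Let g be a nonzero integer that is not -1 and not a perfect power, written g = g₀·g_s² with g₀ squarefree, and d a positive even integer. If g₀ divides d, d ≡ 2 mod 4, and g₀ ≡ 3 mod 4, then there is no odd prime p such that g is a primitive root mod both p and p+d; in fact (g/n) = ((g)/(n+d)) = -1 fails for every odd n coprime to g_s. -/
/-- Key sign-flip lemma: if `g₀ ≡ 3 (mod 4)`, `g₀ ∣ d`, `d ≡ 2 (mod 4)`, and `n` is odd,
then `J(g₀ | n + d) = - J(g₀ | n)`. -/
lemma jacobi_flip (g₀ : ℤ) (d n : ℕ) (hdvd : g₀ ∣ (d : ℤ)) (hd4 : d % 4 = 2)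
    (hg4 : g₀ % 4 = 3) (hn : Odd n) : jacobiSym g₀ (n + d) = - jacobiSym g₀ n := by
  have hn2 : n % 2 = 1 := Nat.odd_iff.mp hn
  have hmod : ∀ m : ℤ, m ∣ (d : ℤ) → ((n + d : ℕ) : ℤ) % m = (n : ℤ) % m := by
    rintro m ⟨c, hc⟩
    push_cast
    rw [hc, Int.add_mul_emod_self_left]
  rcases lt_or_gt_of_ne (show g₀ ≠ 0 by omega) with hneg | hpos
  · -- g₀ < 0 : write g₀ = -(m : ℤ) with m % 4 = 1
    set m : ℕ := (-g₀).toNat with hm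
    have hgm : g₀ = -(m : ℤ) := by omega
    have hm4 : m % 4 = 1 := by omega
    have hodd_nd : Odd (n + d) := by rw [Nat.odd_iff]; omega
    have h1 : jacobiSym g₀ (n + d) = ZMod.χ₄ (((n + d : ℕ)) : ZMod 4) * jacobiSym (m : ℤ) (n + d) := by
      rw [hgm, jacobiSym.neg _ hodd_nd]
    have h2 : jacobiSym g₀ n = ZMod.χ₄ ((n : ℕ) : ZMod 4) * jacobiSym (m : ℤ) n := by
      rw [hgm, jacobiSym.neg _ hn]
    have hsame : jacobiSym (m : ℤ) (n + d) = jacobiSym (m : ℤ) n := by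
      rw [jacobiSym.quadratic_reciprocity_one_mod_four hm4 hodd_nd,
        jacobiSym.quadratic_reciprocity_one_mod_four hm4 hn]
      have hmd : (m : ℤ) ∣ (d : ℤ) := by
        have : ((m : ℕ) : ℤ) = -g₀ := by omega
        rw [this]
        exact (neg_dvd).mpr hdvd
      exact jacobiSym.mod_left' (hmod _ hmd)
    have hχ : ZMod.χ₄ (((n + d : ℕ)) : ZMod 4) = - ZMod.χ₄ ((n : ℕ) : ZMod 4) := by
      rcases (show n % 4 = 1 ∨ n % 4 = 3 by omega) with h | h
      · rw [ZMod.χ₄_nat_one_mod_four h, ZMod.χ₄_nat_three_mod_four (show (n + d) % 4 = 3 by omega)]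
      · rw [ZMod.χ₄_nat_three_mod_four h, ZMod.χ₄_nat_one_mod_four (show (n + d) % 4 = 1 by omega)]
        ring
    rw [h1, h2, hsame, hχ, neg_mul]
  · -- g₀ > 0 : write g₀ = (a : ℤ) with a % 4 = 3
    set a : ℕ := g₀.toNat with ha
    have hga : g₀ = (a : ℤ) := by omega
    have ha4 : a % 4 = 3 := by omega
    have haodd : Odd a := by rw [Nat.odd_iff]; omega
    have hsame : jacobiSym ((n + d : ℕ) : ℤ) a = jacobiSym ((n : ℕ) : ℤ) a :=
      jacobiSym.mod_left' (hmod _ (hga ▸ hdvd))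
    rw [hga]
    rcases (show n % 4 = 1 ∨ n % 4 = 3 by omega) with h | h
    · rw [jacobiSym.quadratic_reciprocity_three_mod_four ha4 (show (n + d) % 4 = 3 by omega),
        jacobiSym.quadratic_reciprocity_one_mod_four' haodd h, hsame]
    · rw [jacobiSym.quadratic_reciprocity_one_mod_four' haodd (show (n + d) % 4 = 1 by omega),
        jacobiSym.quadratic_reciprocity_three_mod_four ha4 h, hsame, neg_neg]

/-- A primitive root mod an odd prime is a quadratic non-residue. -/
lemma jacobi_of_primroot (g : ℤ) (p : ℕ) (hp : p.Prime) (hp2 : p ≠ 2)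
    (hord : orderOf ((g : ZMod p)) = p - 1) :
    jacobiSym g p = -1 ∧ ¬ ((p : ℤ) ∣ g) := by
  haveI : Fact p.Prime := ⟨hp⟩
  have hp3 : 3 ≤ p := by
    have := hp.two_le; rcases Nat.lt_or_ge p 3 with h | h
    · interval_cases p <;> simp_all
    · exact h
  have hgz : (g : ZMod p) ≠ 0 := by
    intro h
    have h1 : (g : ZMod p) ^ (p - 1) = 1 := by rw [← hord]; exact pow_orderOf_eq_one _
    rw [h, zero_pow (by omega)] at h1
    exact zero_ne_one h1
  have hnsq : ¬ IsSquare ((g : ZMod p)) := by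
    rintro ⟨x, hx⟩
    have hx0 : x ≠ 0 := by rintro rfl; simp at hx; exact hgz hx
    have hpe : 2 * ((p - 1) / 2) = p - 1 := by
      have := hp.two_le
      have hodd : p % 2 = 1 := Nat.odd_iff.mp (hp.odd_of_ne_two hp2)
      omega
    have h1 : (g : ZMod p) ^ ((p - 1) / 2) = 1 := by
      rw [hx, ← sq, ← pow_mul, hpe]
      exact ZMod.pow_card_sub_one_eq_one hx0
    have hdv := orderOf_dvd_of_pow_eq_one h1
    rw [hord] at hdv
    have := Nat.le_of_dvd (by omega) hdv
    omega
  constructor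
  · rw [← jacobiSym.legendreSym.to_jacobiSym]
    exact legendreSym.eq_neg_one_iff p |>.mpr hnsq
  · intro hdvd
    exact hgz ((ZMod.intCast_zmod_eq_zero_iff_dvd g p).mpr hdvd)

theorem stmt_18 (g g₀ gs : ℤ) (d : ℕ)
    (hfac : g = g₀ * gs ^ 2) (hsf : Squarefree g₀)
    (h0 : g ≠ 0) (h1 : g ≠ 1) (hm1 : g ≠ -1)
    (hpow : ∀ (b : ℤ) (k : ℕ), 2 ≤ k → g ≠ b ^ k)
    (hd : 0 < d) (hde : Even d)
    (hdvd : g₀ ∣ (d : ℤ)) (hd4 : d % 4 = 2) (hg4 : g₀ % 4 = 3) :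
    (∀ n : ℕ, Odd n → IsCoprime (n : ℤ) gs →
        ¬ (jacobiSym g n = -1 ∧ jacobiSym g (n + d) = -1)) ∧
    ¬ ∃ p : ℕ, p.Prime ∧ p ≠ 2 ∧ (p + d).Prime ∧
        orderOf ((g : ZMod p)) = p - 1 ∧
        orderOf ((g : ZMod (p + d))) = (p + d) - 1 := by
  have part1 : ∀ n : ℕ, Odd n → IsCoprime (n : ℤ) gs →
      ¬ (jacobiSym g n = -1 ∧ jacobiSym g (n + d) = -1) := by
    intro n hn hcop ⟨hJn, hJnd⟩
    have hgcd : gs.gcd n = 1 := by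
      rw [Int.gcd_comm, ← Int.isCoprime_iff_gcd_eq_one]
      exact hcop
    have hJn' : jacobiSym g n = jacobiSym g₀ n := by
      rw [hfac, jacobiSym.mul_left, jacobiSym.sq_one' hgcd, mul_one]
    have hflip := jacobi_flip g₀ d n hdvd hd4 hg4 hn
    have hg0n : jacobiSym g₀ n = -1 := by rw [← hJn', hJn]
    have hJnd' : jacobiSym g (n + d) = jacobiSym g₀ (n + d) * jacobiSym gs (n + d) ^ 2 := by
      rw [hfac, jacobiSym.mul_left, jacobiSym.pow_left]
    rw [hJnd', hflip, hg0n, neg_neg, one_mul] at hJnd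
    have := sq_nonneg (jacobiSym gs (n + d))
    omega
  refine ⟨part1, ?_⟩
  rintro ⟨p, hp, hp2, hpd, ho1, ho2⟩
  have hpodd : Odd p := hp.odd_of_ne_two hp2
  have hpdodd : Odd (p + d) := by
    rw [Nat.odd_iff] at *
    rcases hde with ⟨k, hk⟩
    omega
  have hpd2 : p + d ≠ 2 := by
    intro h; rw [Nat.odd_iff] at hpdodd; omega
  obtain ⟨hJ1, hnd1⟩ := jacobi_of_primroot g p hp hp2 ho1
  obtain ⟨hJ2, _⟩ := jacobi_of_primroot g (p + d) hpd hpd2 ho2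
  have hcop : IsCoprime (p : ℤ) gs := by
    rw [(Nat.prime_iff_prime_int.mp hp).coprime_iff_not_dvd]
    intro hdgs
    exact hnd1 (hfac ▸ Dvd.dvd.mul_left (hdgs.trans (dvd_pow_self gs two_ne_zero)) g₀)
  exact part1 p hpodd hcop ⟨hJ1, hJ2⟩
end
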